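/- arXiv:1205.0947 — 4 statements merged into one kernel-verified Lean document; each statement's English description precedes it below -/
import Mathlib

section
/- For every probability measure ν on [0,∞], the mass of the atom at infinity is recovered from F_ν via the limit lim_{n→∞} ( −log F_ν(−n, 0) + log F_ν(−n, n) ) = ν({∞}), where n runs over the positive integers. -/
open MeasureTheory Filter Topology
open scoped ENNReal

/-- Standard normal density. -/
noncomputable def stdPdf (t : ℝ) : ℝ := (Real.sqrt (2 * Real.pi))⁻¹ * Real.exp (-(t ^ 2) / 2)

/-- Standard normal CDF. -/
noncomputable def stdCdf (x : ℝ) : ℝ := ∫ t in Set.Iic x, stdPdf t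

/-- The integrand `Φ(λ + (y−x)/(2λ)) e^{−x} + Φ(λ + (x−y)/(2λ)) e^{−y}` extended continuously
to `λ = 0` and `λ = ∞` (we identify `[0,∞]` with `ℝ≥0∞`). -/
noncomputable def nuKer (x y : ℝ) (l : ℝ≥0∞) : ℝ :=
  if l = 0 then Real.exp (-min x y)
  else if l = ⊤ then Real.exp (-x) + Real.exp (-y)
  else
    stdCdf (l.toReal + (y - x) / (2 * l.toReal)) * Real.exp (-x)
      + stdCdf (l.toReal + (x - y) / (2 * l.toReal)) * Real.exp (-y)

/-- The mixed bivariate Hüsler–Reiss distribution function `F_ν` associated with a (probability)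
measure `ν` on `[0,∞]`. -/
noncomputable def Fnu (ν : Measure ℝ≥0∞) (x y : ℝ) : ℝ :=
  Real.exp (-∫ l, nuKer x y l ∂ν)

/-- Weak convergence of measures: convergence of integrals of bounded continuous functions. -/
def WeakTendsto {α : Type*} [TopologicalSpace α] [MeasurableSpace α]
    (μ : ℕ → Measure α) (ν : Measure α) : Prop :=
  ∀ f : BoundedContinuousFunction α ℝ,
    Tendsto (fun n => ∫ a, f a ∂(μ n)) atTop (𝓝 (∫ a, f a ∂ν))

open Set Real

section aux

lemma stdPdf_eq (t : ℝ) : stdPdf t = (Real.sqrt (2 * Real.pi))⁻¹ * Real.exp (-(2⁻¹) * t ^ 2) := by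
  rw [stdPdf]; ring_nf

lemma stdPdf_nonneg (t : ℝ) : 0 ≤ stdPdf t := by
  apply mul_nonneg (inv_nonneg.2 (Real.sqrt_nonneg _)) (Real.exp_nonneg _)

lemma integrable_stdPdf : Integrable stdPdf := by
  have : Integrable (fun t : ℝ => (Real.sqrt (2 * Real.pi))⁻¹ * Real.exp (-(2⁻¹) * t ^ 2)) :=
    (integrable_exp_neg_mul_sq (by norm_num)).const_mul _
  exact this.congr (by filter_upwards with t using (stdPdf_eq t).symm)

lemma integral_stdPdf : ∫ t, stdPdf t = 1 := by
  simp_rw [stdPdf_eq]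
  rw [integral_const_mul, integral_gaussian]
  rw [show Real.pi / 2⁻¹ = 2 * Real.pi by ring]
  rw [inv_mul_cancel₀ (by positivity)]

lemma stdCdf_nonneg (x : ℝ) : 0 ≤ stdCdf x :=
  setIntegral_nonneg measurableSet_Iic fun t _ => stdPdf_nonneg t

lemma stdCdf_mono : Monotone stdCdf := fun a b hab =>
  setIntegral_mono_set integrable_stdPdf.integrableOn
    (Eventually.of_forall stdPdf_nonneg) (HasSubset.Subset.eventuallyLE (Iic_subset_Iic.2 hab))

lemma stdCdf_le_one (x : ℝ) : stdCdf x ≤ 1 := by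
  rw [← integral_stdPdf]
  exact setIntegral_le_integral integrable_stdPdf (Eventually.of_forall stdPdf_nonneg)

lemma measurable_stdCdf : Measurable stdCdf := stdCdf_mono.measurable

lemma integral_t_exp (a : ℝ) :
    ∫ t in Ioi a, t * Real.exp (-(2⁻¹) * t ^ 2) = Real.exp (-(2⁻¹) * a ^ 2) := by
  have A : ∀ x : ℝ, HasDerivAt (fun x : ℝ => -Real.exp (-(2⁻¹) * x ^ 2))
      (x * Real.exp (-(2⁻¹) * x ^ 2)) x := by
    intro x
    refine (((hasDerivAt_pow 2 x).const_mul (-(2⁻¹ : ℝ))).exp).neg.congr_deriv ?_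
    simp; ring
  have B : Tendsto (fun y : ℝ => -Real.exp (-(2⁻¹) * y ^ 2)) atTop (𝓝 0) := by
    rw [show (0 : ℝ) = -0 by ring]
    refine Tendsto.neg (Real.tendsto_exp_atBot.comp ?_)
    exact (tendsto_pow_atTop two_ne_zero).const_mul_atTop_of_neg (by norm_num)
  have := integral_Ioi_of_hasDerivAt_of_tendsto' (a := a) (fun x _ => A x)
    ((integrable_mul_exp_neg_mul_sq (by norm_num : (0:ℝ) < 2⁻¹)).integrableOn
      (s := Ioi a)) B
  rw [this]; ring

lemma stdCdf_tail {a : ℝ} (ha : 1 ≤ a) :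
    1 - stdCdf a ≤ (Real.sqrt (2 * Real.pi))⁻¹ * Real.exp (-(2⁻¹) * a ^ 2) := by
  have hsplit : 1 - stdCdf a = ∫ t in Ioi a, stdPdf t := by
    rw [← integral_stdPdf, stdCdf, ← integral_add_compl measurableSet_Iic integrable_stdPdf,
      compl_Iic]
    ring
  rw [hsplit]
  calc ∫ t in Ioi a, stdPdf t
      ≤ ∫ t in Ioi a, (Real.sqrt (2 * Real.pi))⁻¹ * (t * Real.exp (-(2⁻¹) * t ^ 2)) := by
        apply setIntegral_mono_on integrable_stdPdf.integrableOn
        · exact (((integrable_mul_exp_neg_mul_sq (by norm_num : (0:ℝ) < 2⁻¹)).const_mul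
            _).integrableOn)
        · exact measurableSet_Ioi
        · intro t ht
          have ht1 : 1 ≤ t := le_of_lt (lt_of_le_of_lt ha ht)
          rw [stdPdf]
          rw [show -(t^2)/2 = -(2⁻¹) * t^2 by ring]
          have : Real.exp (-(2⁻¹) * t ^ 2) ≤ t * Real.exp (-(2⁻¹) * t ^ 2) := by
            nth_rewrite 1 [← one_mul (Real.exp _)]
            exact mul_le_mul_of_nonneg_right ht1 (Real.exp_nonneg _)
          exact mul_le_mul_of_nonneg_left this (inv_nonneg.2 (Real.sqrt_nonneg _))
    _ = (Real.sqrt (2 * Real.pi))⁻¹ * Real.exp (-(2⁻¹) * a ^ 2) := by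
        rw [integral_const_mul, integral_t_exp]

lemma sqrt_two_pi_inv_le_one : (Real.sqrt (2 * Real.pi))⁻¹ ≤ 1 := by
  rw [inv_le_one_iff₀]
  right
  rw [show (1:ℝ) = Real.sqrt 1 by simp]
  apply Real.sqrt_le_sqrt
  nlinarith [Real.pi_gt_three]

lemma stdCdf_le_exp {x : ℝ} (hx : x ≤ -2) : stdCdf x ≤ Real.exp x := by
  calc stdCdf x ≤ ∫ t in Iic x, Real.exp t := by
        apply setIntegral_mono_on integrable_stdPdf.integrableOn (integrableOn_exp_Iic x)
          measurableSet_Iic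
        intro t ht
        simp only [mem_Iic] at ht
        have ht2 : t ≤ -2 := le_trans ht hx
        rw [stdPdf]
        calc (Real.sqrt (2 * Real.pi))⁻¹ * Real.exp (-(t ^ 2) / 2)
            ≤ 1 * Real.exp (-(t^2)/2) :=
              mul_le_mul_of_nonneg_right sqrt_two_pi_inv_le_one (Real.exp_nonneg _)
          _ = Real.exp (-(t^2)/2) := one_mul _
          _ ≤ Real.exp t := Real.exp_le_exp.2 (by nlinarith)
    _ = Real.exp x := integral_exp_Iic x

lemma tendsto_stdCdf_atBot : Tendsto stdCdf atBot (𝓝 0) := by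
  apply tendsto_of_tendsto_of_tendsto_of_le_of_le' (tendsto_const_nhds) Real.tendsto_exp_atBot
  · exact Eventually.of_forall stdCdf_nonneg
  · filter_upwards [eventually_le_atBot (-2 : ℝ)] with x hx using stdCdf_le_exp hx

lemma stdCdf_tail' {a : ℝ} (ha : 1 ≤ a) : 1 - stdCdf a ≤ Real.exp (-(2⁻¹) * a ^ 2) :=
  (stdCdf_tail ha).trans (by
    nth_rewrite 2 [← one_mul (Real.exp _)]
    exact mul_le_mul_of_nonneg_right sqrt_two_pi_inv_le_one (Real.exp_nonneg _))

end aux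

section key
variable {t : ℝ}

lemma term1_bounds (ht : 0 < t) {n : ℕ} (hn : 1 ≤ n) :
    -Real.exp ((n:ℝ)/2 - t^2/2 - (n:ℝ)^2/(8*t^2)) ≤
      (stdCdf (t + n/(2*t)) - stdCdf (t + n/t)) * Real.exp n ∧
    (stdCdf (t + n/(2*t)) - stdCdf (t + n/t)) * Real.exp n ≤ 0 := by
  have hn1 : (1:ℝ) ≤ (n:ℝ) := by exact_mod_cast hn
  have e : t * (t + (n:ℝ)/(2*t)) = t^2 + n/2 := by field_simp
  have ha1 : 1 ≤ t + n/(2*t) := by nlinarith [sq_nonneg (2*t - 1)]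
  have hab : t + n/(2*t) ≤ t + n/t := by
    have : (n:ℝ)/(2*t) ≤ n/t := by
      apply div_le_div_of_nonneg_left (by positivity) ht (by linarith)
    linarith
  constructor
  · have h1 : stdCdf (t + n/(2*t)) - stdCdf (t + n/t) ≥ -(1 - stdCdf (t + n/(2*t))) := by
      have := stdCdf_le_one (t + n/t); linarith
    have h2 : (1 - stdCdf (t + n/(2*t))) ≤ Real.exp (-(2⁻¹) * (t + n/(2*t))^2) :=
      stdCdf_tail' ha1
    have h3 : (stdCdf (t + n/(2*t)) - stdCdf (t + n/t)) * Real.exp n ≥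
        -(Real.exp (-(2⁻¹) * (t + n/(2*t))^2) * Real.exp n) := by
      have := Real.exp_nonneg (n:ℝ)
      nlinarith [stdCdf_nonneg (t + n/(2*t)), stdCdf_le_one (t + n/(2*t))]
    refine le_trans (le_of_eq ?_) h3
    rw [← Real.exp_add, neg_inj]
    congr 1
    field_simp
    ring
  · apply mul_nonpos_of_nonpos_of_nonneg _ (Real.exp_nonneg _)
    have := stdCdf_mono hab
    linarith

lemma exponent_nonpos (ht : 0 < t) (n : ℕ) :
    (n:ℝ)/2 - t^2/2 - (n:ℝ)^2/(8*t^2) ≤ 0 := by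
  have h : (n:ℝ)/2 - t^2/2 - (n:ℝ)^2/(8*t^2) = -(((n:ℝ) - 2*t^2)^2/(8*t^2)) := by
    field_simp
    ring
  rw [h]
  exact neg_nonpos.2 (by positivity)

lemma tendsto_exponent (ht : 0 < t) :
    Tendsto (fun n : ℕ => (n:ℝ)/2 - t^2/2 - (n:ℝ)^2/(8*t^2)) atTop atBot := by
  apply tendsto_atBot_mono' atTop _
    (tendsto_neg_atTop_atBot.comp
      ((tendsto_natCast_atTop_atTop (R := ℝ)).atTop_div_const two_pos))
  filter_upwards [eventually_ge_atTop ⌈8*t^2⌉₊] with n hn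
  have h8 : 8*t^2 ≤ (n:ℝ) := le_trans (Nat.le_ceil _) (by exact_mod_cast hn)
  have hnn : (n:ℝ) ≤ (n:ℝ)^2/(8*t^2) := by
    rw [le_div_iff₀ (by positivity)]
    nlinarith [Nat.cast_nonneg (α := ℝ) n]
  have ht2 : 0 ≤ t^2/2 := by positivity
  simp only [Function.comp]
  linarith

lemma tendsto_term1 (ht : 0 < t) :
    Tendsto (fun n : ℕ => (stdCdf (t + n/(2*t)) - stdCdf (t + n/t)) * Real.exp n)
      atTop (𝓝 0) := by
  apply tendsto_of_tendsto_of_tendsto_of_le_of_le'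
    (g := fun n : ℕ => -Real.exp ((n:ℝ)/2 - t^2/2 - (n:ℝ)^2/(8*t^2)))
    (h := fun _ : ℕ => (0:ℝ))
  · rw [show (0:ℝ) = -0 by ring]
    exact (Real.tendsto_exp_atBot.comp (tendsto_exponent ht)).neg
  · exact tendsto_const_nhds
  · filter_upwards [eventually_ge_atTop 1] with n hn using (term1_bounds ht hn).1
  · filter_upwards [eventually_ge_atTop 1] with n hn using (term1_bounds ht hn).2

lemma tendsto_term2 (ht : 0 < t) :
    Tendsto (fun n : ℕ => stdCdf (t - n/(2*t))) atTop (𝓝 0) := by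
  apply tendsto_stdCdf_atBot.comp
  have base : Tendsto (fun n : ℕ => -((n:ℝ)/(2*t)) + t) atTop atBot :=
    tendsto_atBot_add_const_right atTop t
      (tendsto_neg_atTop_atBot.comp
        ((tendsto_natCast_atTop_atTop (R := ℝ)).atTop_div_const (by positivity : (0:ℝ) < 2*t)))
  exact base.congr (fun n => by ring)

lemma tendsto_term3 (ht : 0 < t) :
    Tendsto (fun n : ℕ => stdCdf (t - n/t) * Real.exp (-(n:ℝ))) atTop (𝓝 0) := by
  apply tendsto_of_tendsto_of_tendsto_of_le_of_le'
    (g := fun _ : ℕ => (0:ℝ)) (h := fun n : ℕ => Real.exp (-(n:ℝ)))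
  · exact tendsto_const_nhds
  · exact Real.tendsto_exp_atBot.comp
      (tendsto_neg_atTop_atBot.comp (tendsto_natCast_atTop_atTop (R := ℝ)))
  · filter_upwards with n
    exact mul_nonneg (stdCdf_nonneg _) (Real.exp_nonneg _)
  · filter_upwards with n
    nth_rewrite 2 [← one_mul (Real.exp _)]
    exact mul_le_mul_of_nonneg_right (stdCdf_le_one _) (Real.exp_nonneg _)

/-- key pointwise limit for finite positive `t` -/
lemma key_tendsto (ht : 0 < t) :
    Tendsto (fun n : ℕ =>
      (stdCdf (t + n/(2*t)) * Real.exp n + stdCdf (t - n/(2*t))) -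
      (stdCdf (t + n/t) * Real.exp n + stdCdf (t - n/t) * Real.exp (-(n:ℝ))))
      atTop (𝓝 0) := by
  have := ((tendsto_term1 ht).add (tendsto_term2 ht)).sub (tendsto_term3 ht)
  simp only [add_zero, sub_zero, zero_sub, zero_add, neg_zero] at this
  convert this using 2 with n
  ring

/-- key uniform bound for finite positive `t` -/
lemma key_bound (ht : 0 < t) {n : ℕ} (hn : 1 ≤ n) :
    |(stdCdf (t + n/(2*t)) * Real.exp n + stdCdf (t - n/(2*t))) -
      (stdCdf (t + n/t) * Real.exp n + stdCdf (t - n/t) * Real.exp (-(n:ℝ)))| ≤ 3 := by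
  obtain ⟨h1, h2⟩ := term1_bounds ht hn
  have hexp : Real.exp ((n:ℝ)/2 - t^2/2 - (n:ℝ)^2/(8*t^2)) ≤ 1 := by
    rw [← Real.exp_zero]
    exact Real.exp_le_exp.2 (exponent_nonpos ht n)
  have h3 : stdCdf (t - n/(2*t)) ≤ 1 := stdCdf_le_one _
  have h4 : 0 ≤ stdCdf (t - n/(2*t)) := stdCdf_nonneg _
  have h5 : 0 ≤ stdCdf (t - n/t) * Real.exp (-(n:ℝ)) :=
    mul_nonneg (stdCdf_nonneg _) (Real.exp_nonneg _)
  have h6 : stdCdf (t - n/t) * Real.exp (-(n:ℝ)) ≤ 1 := by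
    calc stdCdf (t - n/t) * Real.exp (-(n:ℝ)) ≤ 1 * Real.exp (-(n:ℝ)) :=
          mul_le_mul_of_nonneg_right (stdCdf_le_one _) (Real.exp_nonneg _)
      _ ≤ 1 := by
          rw [one_mul, ← Real.exp_zero]
          exact Real.exp_le_exp.2 (neg_nonpos.2 (Nat.cast_nonneg n))
  rw [abs_le]
  constructor <;> nlinarith

end key

section nuKerLemmas

lemma measurable_nuKer (x y : ℝ) : Measurable (nuKer x y) := by
  unfold nuKer
  apply Measurable.ite (by simp [MeasurableSet.singleton])
  · exact measurable_const
  apply Measurable.ite (by simp [MeasurableSet.singleton])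
  · exact measurable_const
  apply Measurable.add
  · exact ((measurable_stdCdf.comp (ENNReal.measurable_toReal.add
      (measurable_const.div (ENNReal.measurable_toReal.const_mul 2)))).mul_const _)
  · exact ((measurable_stdCdf.comp (ENNReal.measurable_toReal.add
      (measurable_const.div (ENNReal.measurable_toReal.const_mul 2)))).mul_const _)

lemma nuKer_abs_le (x y : ℝ) (l : ℝ≥0∞) :
    ‖nuKer x y l‖ ≤ Real.exp (-x) + Real.exp (-y) := by
  have hxy : Real.exp (-min x y) ≤ Real.exp (-x) + Real.exp (-y) := by
    rcases min_choice x y with h | h <;> rw [h] <;>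
      nlinarith [Real.exp_nonneg (-x), Real.exp_nonneg (-y)]
  have hnn : 0 ≤ nuKer x y l := by
    unfold nuKer
    split_ifs
    · exact Real.exp_nonneg _
    · positivity
    · have := stdCdf_nonneg (l.toReal + (y - x) / (2 * l.toReal))
      have := stdCdf_nonneg (l.toReal + (x - y) / (2 * l.toReal))
      positivity
  rw [Real.norm_eq_abs, abs_of_nonneg hnn]
  unfold nuKer
  split_ifs
  · exact hxy
  · exact le_refl _
  · have b1 := stdCdf_le_one (l.toReal + (y - x) / (2 * l.toReal))
    have b2 := stdCdf_le_one (l.toReal + (x - y) / (2 * l.toReal))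
    have e1 := Real.exp_nonneg (-x)
    have e2 := Real.exp_nonneg (-y)
    nlinarith [stdCdf_nonneg (l.toReal + (y - x) / (2 * l.toReal)),
      stdCdf_nonneg (l.toReal + (x - y) / (2 * l.toReal))]

lemma integrable_nuKer (ν : Measure ℝ≥0∞) [IsProbabilityMeasure ν] (x y : ℝ) :
    Integrable (nuKer x y) ν := by
  apply Integrable.mono' (integrable_const (Real.exp (-x) + Real.exp (-y)))
    (measurable_nuKer x y).aestronglyMeasurable
  exact Eventually.of_forall (nuKer_abs_le x y)

end nuKerLemmas

lemma gd_zero (n : ℕ) :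
    nuKer (-(n:ℝ)) 0 0 - nuKer (-(n:ℝ)) (n:ℝ) 0 = 0 := by
  have h1 : min (-(n:ℝ)) 0 = -(n:ℝ) := min_eq_left (neg_nonpos.2 (Nat.cast_nonneg n))
  have h2 : min (-(n:ℝ)) (n:ℝ) = -(n:ℝ) :=
    min_eq_left (le_trans (neg_nonpos.2 (Nat.cast_nonneg n)) (Nat.cast_nonneg n))
  simp [nuKer, h1, h2]

lemma gd_top (n : ℕ) :
    nuKer (-(n:ℝ)) 0 ⊤ - nuKer (-(n:ℝ)) (n:ℝ) ⊤ = 1 - Real.exp (-(n:ℝ)) := by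
  simp [nuKer]

lemma gd_finite (n : ℕ) {l : ℝ≥0∞} (h0 : l ≠ 0) (ht : l ≠ ⊤) :
    nuKer (-(n:ℝ)) 0 l - nuKer (-(n:ℝ)) (n:ℝ) l =
      (stdCdf (l.toReal + n/(2*l.toReal)) * Real.exp n + stdCdf (l.toReal - n/(2*l.toReal))) -
      (stdCdf (l.toReal + n/l.toReal) * Real.exp n
        + stdCdf (l.toReal - n/l.toReal) * Real.exp (-(n:ℝ))) := by
  simp only [nuKer, if_neg h0, if_neg ht]
  rw [show ((0:ℝ) - -(n:ℝ)) = (n:ℝ) from by ring,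
    show (-(n:ℝ) - 0) = -(n:ℝ) from by ring,
    show ((n:ℝ) - -(n:ℝ)) = 2*(n:ℝ) from by ring,
    show (-(n:ℝ) - (n:ℝ)) = -(2*(n:ℝ)) from by ring,
    mul_div_mul_left (n:ℝ) l.toReal (two_ne_zero),
    neg_div, neg_div, mul_div_mul_left (n:ℝ) l.toReal (two_ne_zero),
    neg_zero, neg_neg, Real.exp_zero, mul_one]
  rw [← sub_eq_add_neg, ← sub_eq_add_neg]

/-- The atom of `ν` at `∞` is recovered from `F_ν`:
`lim_{n→∞} (−log F_ν(−n,0) + log F_ν(−n,n)) = ν({∞})`. -/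
theorem stmt5 (ν : Measure ℝ≥0∞) (hν : IsProbabilityMeasure ν) :
    Tendsto (fun n : ℕ =>
        -Real.log (Fnu ν (-(n : ℝ)) 0) + Real.log (Fnu ν (-(n : ℝ)) (n : ℝ)))
      atTop (𝓝 ((ν {⊤}).toReal)) := by
  have heq : ∀ n : ℕ, -Real.log (Fnu ν (-(n : ℝ)) 0) + Real.log (Fnu ν (-(n : ℝ)) (n : ℝ))
      = ∫ l, (nuKer (-(n:ℝ)) 0 l - nuKer (-(n:ℝ)) (n:ℝ) l) ∂ν := by
    intro n
    rw [Fnu, Fnu, Real.log_exp, Real.log_exp,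
      integral_sub (integrable_nuKer ν _ _) (integrable_nuKer ν _ _)]
    ring
  simp only [heq]
  have hind : (∫ l, Set.indicator {(⊤ : ℝ≥0∞)} (fun _ => (1:ℝ)) l ∂ν) = (ν {⊤}).toReal := by
    rw [integral_indicator_const (1:ℝ) (measurableSet_singleton ⊤)]
    simp
    rfl
  rw [← hind]
  apply tendsto_integral_filter_of_dominated_convergence (bound := fun _ => (3:ℝ))
  · exact Eventually.of_forall fun n =>
      ((measurable_nuKer _ _).sub (measurable_nuKer _ _)).aestronglyMeasurable
  · filter_upwards [eventually_ge_atTop 1] with n hn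
    apply ae_of_all
    intro l
    rw [Real.norm_eq_abs]
    rcases eq_or_ne l 0 with h0 | h0
    · subst h0; rw [gd_zero]; norm_num
    rcases eq_or_ne l ⊤ with htop | htop
    · subst htop
      rw [gd_top]
      have e1 : 0 ≤ Real.exp (-(n:ℝ)) := Real.exp_nonneg _
      have e2 : Real.exp (-(n:ℝ)) ≤ 1 := by
        rw [← Real.exp_zero]
        exact Real.exp_le_exp.2 (neg_nonpos.2 (Nat.cast_nonneg n))
      rw [abs_le]; constructor <;> nlinarith
    · rw [gd_finite n h0 htop]
      exact key_bound (ENNReal.toReal_pos h0 htop) hn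
  · exact integrable_const _
  · apply ae_of_all
    intro l
    rcases eq_or_ne l 0 with h0 | h0
    · subst h0
      simp only [gd_zero]
      rw [Set.indicator_of_notMem (by simp)]
      exact tendsto_const_nhds
    rcases eq_or_ne l ⊤ with htop | htop
    · subst htop
      simp only [gd_top]
      have hi : Set.indicator ({⊤} : Set ℝ≥0∞) (fun _ => (1:ℝ)) ⊤ = 1 :=
        Set.indicator_of_mem (Set.mem_singleton ⊤) (fun _ => (1:ℝ))
      rw [hi]
      have h0' : Tendsto (fun n : ℕ => Real.exp (-(n:ℝ))) atTop (𝓝 0) :=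
        Real.tendsto_exp_atBot.comp
          (tendsto_neg_atTop_atBot.comp (tendsto_natCast_atTop_atTop (R := ℝ)))
      have h1 : Tendsto (fun n : ℕ => 1 - Real.exp (-(n:ℝ))) atTop (𝓝 (1 - 0)) :=
        tendsto_const_nhds.sub h0'
      simpa using h1
    · simp only [gd_finite _ h0 htop]
      rw [Set.indicator_of_notMem (by simp [htop])]
      exact key_tendsto (ENNReal.toReal_pos h0 htop)
end

section
/- Let ν be a probability measure on [0,∞], let (R_i)_{i∈ℕ} be i.i.d. random variables with distribution ν, and let (b_n)_{n≥2} be any sequence of positive reals with lim_{n→∞} b_n/√(2 log n) = 1. Then almost surely the random probability measures ν_n = (1/n) Σ_{i=1}^n δ_{R_i · b_n/b_i} on [0,∞] converge weakly to ν as n → ∞ (with the convention ∞·c = ∞ for c > 0). -/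
open MeasureTheory Filter Topology BoundedContinuousFunction
open scoped ENNReal

lemma modulus (f : ℝ≥0∞ →ᵇ ℝ) {ε : ℝ} (hε : 0 < ε) :
    ∃ δ > 0, ∀ (x : ℝ≥0∞) (c : ℝ), |c - 1| ≤ δ → |f (x * ENNReal.ofReal c) - f x| ≤ ε := by
  set U : Set (ℝ≥0∞ × ℝ) := Set.univ ×ˢ Set.Ioo (1/2 : ℝ) 2 with hUdef
  have hUopen : IsOpen U := isOpen_univ.prod isOpen_Ioo
  set g : ℝ≥0∞ × ℝ → ℝ := fun p => |f (p.1 * ENNReal.ofReal p.2) - f p.1| with hgdef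
  have hmul : ∀ p ∈ U, ContinuousAt (fun p : ℝ≥0∞ × ℝ => p.1 * ENNReal.ofReal p.2) p := by
    rintro ⟨x, c⟩ ⟨-, hc1, hc2⟩
    exact ENNReal.Tendsto.mul continuous_fst.continuousAt
      (Or.inr ENNReal.ofReal_ne_top)
      (ENNReal.continuous_ofReal.comp continuous_snd).continuousAt
      (Or.inl (by simp [ENNReal.ofReal_eq_zero]; linarith))
  have hg : ContinuousOn g U := by
    apply ContinuousOn.abs
    apply ContinuousOn.sub
    · exact fun p hp => (f.continuous.continuousAt.comp (hmul p hp)).continuousWithinAt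
    · exact (f.continuous.comp continuous_fst).continuousOn
  have hSopen : IsOpen (U ∩ g ⁻¹' Set.Iio ε) := hg.isOpen_inter_preimage hUopen isOpen_Iio
  have hsub : (Set.univ : Set ℝ≥0∞) ×ˢ ({1} : Set ℝ) ⊆ U ∩ g ⁻¹' Set.Iio ε := by
    rintro ⟨x, c⟩ ⟨-, hc⟩
    simp only [Set.mem_singleton_iff] at hc
    subst hc
    refine ⟨⟨Set.mem_univ _, by norm_num⟩, ?_⟩
    simp [hgdef, hε]
  obtain ⟨u, v, hu, hv, hu1, hv1, huv⟩ :=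
    generalized_tube_lemma isCompact_univ (isCompact_singleton (x := (1:ℝ))) hSopen hsub
  obtain ⟨r, hr, hball⟩ := Metric.isOpen_iff.1 hv 1 (hv1 rfl)
  refine ⟨r/2, by linarith, fun x c hc => ?_⟩
  have hcv : c ∈ v := hball (by simpa [Real.dist_eq] using lt_of_le_of_lt hc (by linarith))
  have : (x, c) ∈ U ∩ g ⁻¹' Set.Iio ε := huv ⟨hu1 (Set.mem_univ x), hcv⟩
  exact le_of_lt this.2

-- key uniform claim
set_option maxHeartbeats 1000000 in
lemma key_unif (b : ℕ → ℝ) (hbpos : ∀ n : ℕ, 1 ≤ n → 0 < b n)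
    (hblim : Tendsto (fun n : ℕ => b n / Real.sqrt (2 * Real.log n)) atTop (𝓝 1))
    {δ : ℝ} (hδ : 0 < δ) {η : ℝ} (hη : 0 < η) (hη1 : η < 1) :
    ∀ᶠ n : ℕ in atTop, ∀ i : ℕ, η * n ≤ i → i ≤ n → |b n / b i - 1| ≤ δ := by
  set ε : ℝ := min (δ/8) (1/2) with hεdef
  have hεpos : 0 < ε := lt_min (by linarith) (by norm_num)
  have hεδ : 8 * ε ≤ δ := by
    have := min_le_left (δ/8) (1/2); linarith [hεdef ▸ this]
  have hεhalf : ε ≤ 1/2 := min_le_right _ _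
  -- quantitative control from hblim
  obtain ⟨M, hM⟩ := (Metric.tendsto_atTop.1 hblim) ε hεpos
  -- eventual log condition
  have hlog : Tendsto (fun n : ℕ => Real.log n) atTop atTop :=
    Real.tendsto_log_atTop.comp tendsto_natCast_atTop_atTop
  have hD : ∀ᶠ n : ℕ in atTop, (2*ε + ε^2) * Real.log n ≥ (1+ε)^2 * (- Real.log η) := by
    have h1 : ∀ᶠ n : ℕ in atTop,
        Real.log n ≥ ((1+ε)^2 * (- Real.log η)) / (2*ε + ε^2) :=
      hlog.eventually_ge_atTop _
    filter_upwards [h1] with n hn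
    rw [ge_iff_le, ← div_le_iff₀' (by nlinarith)]
    exact hn
  have hN1 : ∀ᶠ n : ℕ in atTop, (M:ℝ) ≤ η * n := by
    have : Tendsto (fun n : ℕ => η * n) atTop atTop :=
      (tendsto_natCast_atTop_atTop (R := ℝ)).const_mul_atTop hη
    exact this.eventually_ge_atTop _
  have hN2 : ∀ᶠ n : ℕ in atTop, (3:ℝ) ≤ η * n := by
    have : Tendsto (fun n : ℕ => η * n) atTop atTop :=
      (tendsto_natCast_atTop_atTop (R := ℝ)).const_mul_atTop hη
    exact this.eventually_ge_atTop _
  filter_upwards [hD, hN1, hN2, eventually_ge_atTop M] with n hDn hN1n hN2n hMn i hi1 hi2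
  -- basic facts about i and n
  have hi3 : (3:ℝ) ≤ i := le_trans hN2n hi1
  have hiM : (M:ℝ) ≤ i := le_trans hN1n hi1
  have hiMnat : M ≤ i := by exact_mod_cast hiM
  have hi3nat : 3 ≤ i := by exact_mod_cast hi3
  have hin : (i:ℝ) ≤ n := by exact_mod_cast hi2
  have hn3 : (3:ℝ) ≤ n := le_trans hi3 hin
  have hlogi : 0 < Real.log i := Real.log_pos (by linarith)
  have hlogn : 0 < Real.log n := Real.log_pos (by linarith)
  have hlogin : Real.log i ≤ Real.log n := Real.log_le_log (by linarith) hin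
  -- log n ≤ (1+ε)^2 * log i
  have hlogbound : Real.log n ≤ (1+ε)^2 * Real.log i := by
    have hηn : Real.log η + Real.log n ≤ Real.log i := by
      have : Real.log (η * n) ≤ Real.log i :=
        Real.log_le_log (by positivity) hi1
      rwa [Real.log_mul (ne_of_gt hη) (by positivity)] at this
    nlinarith [hDn]
  set si := Real.sqrt (2 * Real.log i) with hsidef
  set sn := Real.sqrt (2 * Real.log n) with hsndef
  have hsi : 0 < si := Real.sqrt_pos.2 (by linarith)
  have hsn : 0 < sn := Real.sqrt_pos.2 (by linarith)
  have hsile : si ≤ sn := Real.sqrt_le_sqrt (by linarith)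
  have hsnle : sn ≤ (1+ε) * si := by
    have h1 : (2 * Real.log n) ≤ ((1+ε) * si)^2 := by
      have : ((1+ε) * si)^2 = (1+ε)^2 * (2 * Real.log i) := by
        rw [mul_pow, hsidef, Real.sq_sqrt (by linarith)]
      rw [this]; nlinarith
    calc sn = Real.sqrt (2 * Real.log n) := rfl
      _ ≤ Real.sqrt (((1+ε) * si)^2) := Real.sqrt_le_sqrt h1
      _ = (1+ε) * si := Real.sqrt_sq (by positivity)
  -- q bounds
  have hbn : 0 < b n := hbpos n (by omega)
  have hbi : 0 < b i := hbpos i (by omega)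
  have hqn : |b n / sn - 1| ≤ ε := by
    have := hM n hMn
    rw [Real.dist_eq] at this
    exact le_of_lt this
  have hqi : |b i / si - 1| ≤ ε := by
    have := hM i hiMnat
    rw [Real.dist_eq] at this
    exact le_of_lt this
  obtain ⟨hqn1, hqn2⟩ := abs_le.1 hqn
  obtain ⟨hqi1, hqi2⟩ := abs_le.1 hqi
  have hbneq : b n = (b n / sn) * sn := by field_simp
  have hbieq : b i = (b i / si) * si := by field_simp
  have hqn2' : b n / sn ≤ 1+ε := by linarith
  have hqn1' : 1-ε ≤ b n / sn := by linarith
  have hqi2' : b i / si ≤ 1+ε := by linarith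
  have hqi1' : 1-ε ≤ b i / si := by linarith
  have h1ε : (0:ℝ) ≤ 1-ε := by linarith
  have hbn_le : b n ≤ (1+ε) * ((1+ε) * si) := by
    rw [hbneq]
    calc (b n / sn) * sn ≤ (1+ε) * sn := mul_le_mul_of_nonneg_right hqn2' hsn.le
      _ ≤ (1+ε) * ((1+ε)*si) := mul_le_mul_of_nonneg_left hsnle (by linarith)
  have hbn_ge : (1-ε) * si ≤ b n := by
    rw [hbneq]
    calc (1-ε)*si ≤ (1-ε)*sn := mul_le_mul_of_nonneg_left hsile h1ε
      _ ≤ (b n / sn) * sn := mul_le_mul_of_nonneg_right hqn1' hsn.le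
  have hbi_le : b i ≤ (1+ε) * si := by
    rw [hbieq]; exact mul_le_mul_of_nonneg_right hqi2' hsi.le
  have hbi_ge : (1-ε) * si ≤ b i := by
    rw [hbieq]; exact mul_le_mul_of_nonneg_right hqi1' hsi.le
  have h0 : (1+ε)*(1+ε) ≤ (1+δ)*(1-ε) := by
    nlinarith [mul_nonneg (by linarith : (0:ℝ) ≤ δ - 8*ε) (by linarith : (0:ℝ) ≤ 1 - ε),
      sq_nonneg ε, hεpos.le, hεhalf]
  have hup : b n ≤ (1+δ) * b i := by
    calc b n ≤ (1+ε) * ((1+ε) * si) := hbn_le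
      _ = ((1+ε)*(1+ε)) * si := by ring
      _ ≤ ((1+δ)*(1-ε)) * si := mul_le_mul_of_nonneg_right h0 hsi.le
      _ = (1+δ) * ((1-ε)*si) := by ring
      _ ≤ (1+δ) * b i := mul_le_mul_of_nonneg_left hbi_ge (by linarith)
  have hlow : (1-δ) * b i ≤ b n := by
    rcases le_or_gt (1-δ) 0 with h | h
    · exact le_trans (mul_nonpos_of_nonpos_of_nonneg h hbi.le) hbn.le
    · have h2 : (1-δ)*(1+ε) ≤ 1-ε := by
        nlinarith [mul_nonneg (by linarith : (0:ℝ) ≤ δ) hεpos.le]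
      calc (1-δ) * b i ≤ (1-δ) * ((1+ε)*si) := mul_le_mul_of_nonneg_left hbi_le h.le
        _ = ((1-δ)*(1+ε))*si := by ring
        _ ≤ (1-ε)*si := mul_le_mul_of_nonneg_right h2 hsi.le
        _ ≤ b n := hbn_ge
  rw [abs_le]
  constructor
  · have h3 : 1-δ ≤ b n / b i := by rw [le_div_iff₀ hbi]; exact hlow
    linarith
  · have h3 : b n / b i ≤ 1+δ := by rw [div_le_iff₀ hbi]; exact hup
    linarith

lemma badfrac (b : ℕ → ℝ) (hbpos : ∀ n : ℕ, 1 ≤ n → 0 < b n)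
    (hblim : Tendsto (fun n : ℕ => b n / Real.sqrt (2 * Real.log n)) atTop (𝓝 1))
    {δ : ℝ} (hδ : 0 < δ) :
    Tendsto (fun n : ℕ =>
        (((Finset.Icc 1 n).filter (fun i => ¬ |b n / b i - 1| ≤ δ)).card : ℝ) / n)
      atTop (𝓝 0) := by
  classical
  rw [Metric.tendsto_nhds]
  intro ε hε
  set η : ℝ := min (ε/4) (1/2) with hηdef
  have hη : 0 < η := lt_min (by linarith) (by norm_num)
  have hη1 : η < 1 := lt_of_le_of_lt (min_le_right _ _) (by norm_num)
  have hηε : η ≤ ε/4 := min_le_left _ _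
  have hkey := key_unif b hbpos hblim hδ hη hη1
  have hbig : ∀ᶠ n : ℕ in atTop, (4/ε : ℝ) ≤ n := by
    have := tendsto_natCast_atTop_atTop (R := ℝ)
    exact this.eventually_ge_atTop _
  filter_upwards [hkey, hbig, eventually_ge_atTop 1] with n hk hn4 hn1
  have hnpos : (0:ℝ) < n := by
    have : (1:ℝ) ≤ n := by exact_mod_cast hn1
    linarith
  set s := (Finset.Icc 1 n).filter (fun i => ¬ |b n / b i - 1| ≤ δ) with hsdef
  have hsub : s ⊆ Finset.range (Nat.ceil (η * n)) := by
    intro i hi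
    rw [hsdef, Finset.mem_filter, Finset.mem_Icc] at hi
    obtain ⟨⟨hi1, hi2⟩, hibad⟩ := hi
    rw [Finset.mem_range]
    by_contra hcon
    push_neg at hcon
    have : η * n ≤ (i:ℝ) := by
      calc η * (n:ℝ) ≤ (Nat.ceil (η * n) : ℝ) := Nat.le_ceil _
        _ ≤ (i:ℝ) := by exact_mod_cast hcon
    exact hibad (hk i this (by exact_mod_cast hi2))
  have hcard : (s.card : ℝ) ≤ η * n + 1 := by
    have h1 : s.card ≤ Nat.ceil (η * n) := by
      simpa using Finset.card_le_card hsub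
    have h2 : (Nat.ceil (η * n) : ℝ) < η * n + 1 :=
      Nat.ceil_lt_add_one (by positivity)
    have : (s.card : ℝ) ≤ (Nat.ceil (η * n) : ℝ) := by exact_mod_cast h1
    linarith
  have h1n : (1:ℝ) ≤ ε/4 * n := by
    rw [div_le_iff₀ hε] at hn4
    linarith
  have hηn : η * n ≤ ε/4 * n := mul_le_mul_of_nonneg_right hηε hnpos.le
  rw [Real.dist_eq, sub_zero, abs_of_nonneg (by positivity)]
  rw [div_lt_iff₀ hnpos]
  nlinarith

lemma scaled_of_unscaled (b : ℕ → ℝ)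
    (hbad : ∀ δ : ℝ, 0 < δ → Tendsto (fun n : ℕ =>
        (((Finset.Icc 1 n).filter (fun i => ¬ |b n / b i - 1| ≤ δ)).card : ℝ) / n) atTop (𝓝 0))
    (x : ℕ → ℝ≥0∞) (f : ℝ≥0∞ →ᵇ ℝ) {I : ℝ}
    (hU : Tendsto (fun n : ℕ => (n:ℝ)⁻¹ * ∑ i ∈ Finset.Icc 1 n, f (x i)) atTop (𝓝 I)) :
    Tendsto (fun n : ℕ => (n:ℝ)⁻¹ * ∑ i ∈ Finset.Icc 1 n,
        f (x i * ENNReal.ofReal (b n / b i))) atTop (𝓝 I) := by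
  classical
  have hf0 : (0:ℝ) ≤ ‖f‖ := norm_nonneg f
  have hdiff : Tendsto (fun n : ℕ => ((n:ℝ)⁻¹ * ∑ i ∈ Finset.Icc 1 n,
      f (x i * ENNReal.ofReal (b n / b i))) - (n:ℝ)⁻¹ * ∑ i ∈ Finset.Icc 1 n, f (x i))
      atTop (𝓝 0) := by
    rw [NormedAddCommGroup.tendsto_nhds_zero]
    intro ε hε
    obtain ⟨δ, hδ, hmod⟩ := modulus f (show (0:ℝ) < ε/4 by linarith)
    have hb2 := Metric.tendsto_nhds.1 (hbad δ hδ) (ε/(4*(2*‖f‖+1))) (by positivity)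
    filter_upwards [hb2, eventually_ge_atTop 1] with n hbn hn1
    have hnpos : (0:ℝ) < n := by
      have : (1:ℝ) ≤ n := by exact_mod_cast hn1
      linarith
    set bad := (Finset.Icc 1 n).filter (fun i => ¬ |b n / b i - 1| ≤ δ) with hbaddef
    rw [Real.dist_eq, sub_zero] at hbn
    have hbd : (bad.card : ℝ)/n < ε/(4*(2*‖f‖+1)) := lt_of_le_of_lt (le_abs_self _) hbn
    have e1 : ((n:ℝ)⁻¹ * ∑ i ∈ Finset.Icc 1 n, f (x i * ENNReal.ofReal (b n / b i)))
        - (n:ℝ)⁻¹ * ∑ i ∈ Finset.Icc 1 n, f (x i)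
        = (n:ℝ)⁻¹ * ∑ i ∈ Finset.Icc 1 n,
            (f (x i * ENNReal.ofReal (b n / b i)) - f (x i)) := by
      rw [Finset.sum_sub_distrib, mul_sub]
    rw [e1, Real.norm_eq_abs, abs_mul, abs_of_nonneg (by positivity : (0:ℝ) ≤ (n:ℝ)⁻¹)]
    have e2 : |∑ i ∈ Finset.Icc 1 n, (f (x i * ENNReal.ofReal (b n / b i)) - f (x i))|
        ≤ ∑ i ∈ Finset.Icc 1 n, |f (x i * ENNReal.ofReal (b n / b i)) - f (x i)| :=
      Finset.abs_sum_le_sum_abs _ _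
    have e3 : ∑ i ∈ Finset.Icc 1 n, |f (x i * ENNReal.ofReal (b n / b i)) - f (x i)|
        ≤ ∑ i ∈ Finset.Icc 1 n, (if |b n / b i - 1| ≤ δ then ε/4 else 2*‖f‖) := by
      apply Finset.sum_le_sum
      intro i hi
      by_cases h : |b n / b i - 1| ≤ δ
      · simpa [h] using hmod (x i) (b n / b i) h
      · simp only [h, if_false]
        calc |f (x i * ENNReal.ofReal (b n / b i)) - f (x i)|
            ≤ ‖f (x i * ENNReal.ofReal (b n / b i))‖ + ‖f (x i)‖ := by
              rw [Real.norm_eq_abs, Real.norm_eq_abs]; exact abs_sub _ _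
          _ ≤ ‖f‖ + ‖f‖ := add_le_add (f.norm_coe_le_norm _) (f.norm_coe_le_norm _)
          _ = 2*‖f‖ := by ring
    have e4 : ∑ i ∈ Finset.Icc 1 n, (if |b n / b i - 1| ≤ δ then ε/4 else 2*‖f‖)
        = ((Finset.Icc 1 n).filter (fun i => |b n / b i - 1| ≤ δ)).card * (ε/4)
          + bad.card * (2*‖f‖) := by
      rw [Finset.sum_ite]
      simp [hbaddef, mul_comm]
    have hgood : (((Finset.Icc 1 n).filter (fun i => |b n / b i - 1| ≤ δ)).card : ℝ) ≤ n := by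
      have h1 : ((Finset.Icc 1 n).filter (fun i => |b n / b i - 1| ≤ δ)).card
          ≤ (Finset.Icc 1 n).card := Finset.card_filter_le _ _
      have h2 : (Finset.Icc 1 n).card = n := by simp
      have h3 := le_trans h1 (le_of_eq h2)
      exact_mod_cast h3
    calc (n:ℝ)⁻¹ * |∑ i ∈ Finset.Icc 1 n, (f (x i * ENNReal.ofReal (b n / b i)) - f (x i))|
        ≤ (n:ℝ)⁻¹ * (((Finset.Icc 1 n).filter (fun i => |b n / b i - 1| ≤ δ)).card * (ε/4)
          + bad.card * (2*‖f‖)) := by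
          apply mul_le_mul_of_nonneg_left _ (by positivity)
          rw [← e4]
          exact le_trans e2 e3
      _ = (((Finset.Icc 1 n).filter (fun i => |b n / b i - 1| ≤ δ)).card / n) * (ε/4)
          + ((bad.card : ℝ)/n) * (2*‖f‖) := by ring
      _ ≤ 1 * (ε/4) + ((bad.card : ℝ)/n) * (2*‖f‖) := by
          apply add_le_add_left
          apply mul_le_mul_of_nonneg_right _ (by linarith)
          rw [div_le_one hnpos]
          exact hgood
      _ < ε := by
          have h5 : ((bad.card : ℝ)/n) * (2*‖f‖) ≤ ((bad.card : ℝ)/n) * (2*‖f‖+1) := by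
            apply mul_le_mul_of_nonneg_left (by linarith) (by positivity)
          have h6 : ((bad.card : ℝ)/n) * (2*‖f‖+1) < (ε/(4*(2*‖f‖+1))) * (2*‖f‖+1) := by
            apply mul_lt_mul_of_pos_right hbd (by linarith)
          have h7 : (ε/(4*(2*‖f‖+1))) * (2*‖f‖+1) = ε/4 := by
            field_simp
          nlinarith
  have : (fun n : ℕ => (n:ℝ)⁻¹ * ∑ i ∈ Finset.Icc 1 n,
      f (x i * ENNReal.ofReal (b n / b i)))
      = fun n : ℕ => (((n:ℝ)⁻¹ * ∑ i ∈ Finset.Icc 1 n,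
      f (x i * ENNReal.ofReal (b n / b i))) - (n:ℝ)⁻¹ * ∑ i ∈ Finset.Icc 1 n, f (x i))
      + (n:ℝ)⁻¹ * ∑ i ∈ Finset.Icc 1 n, f (x i) := by
    funext n; ring
  rw [this]
  simpa using hdiff.add hU

lemma dense_upgrade (ν : Measure ℝ≥0∞) [IsProbabilityMeasure ν] (x : ℕ → ℝ≥0∞)
    (D : Set (ℝ≥0∞ →ᵇ ℝ)) (hDdense : Dense D)
    (hD : ∀ g ∈ D, Tendsto (fun n : ℕ => (n:ℝ)⁻¹ * ∑ i ∈ Finset.Icc 1 n, g (x i)) atTop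
      (𝓝 (∫ l, g l ∂ν)))
    (f : ℝ≥0∞ →ᵇ ℝ) :
    Tendsto (fun n : ℕ => (n:ℝ)⁻¹ * ∑ i ∈ Finset.Icc 1 n, f (x i)) atTop
      (𝓝 (∫ l, f l ∂ν)) := by
  rw [Metric.tendsto_nhds]
  intro ε hε
  obtain ⟨g, hgD, hgf⟩ : ∃ g ∈ D, dist f g < ε/4 := by
    obtain ⟨g, hgD, h⟩ := Metric.mem_closure_iff.1 (hDdense f) (ε/4) (by linarith)
    exact ⟨g, hgD, h⟩
  have hint : dist (∫ l, g l ∂ν) (∫ l, f l ∂ν) ≤ ε/4 := by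
    rw [Real.dist_eq, ← integral_sub (g.integrable ν) (f.integrable ν)]
    have h1 : ‖∫ l, (g l - f l) ∂ν‖ ≤ dist f g * (ν Set.univ).toReal := by
      apply norm_integral_le_of_norm_le_const
      apply Eventually.of_forall
      intro l
      rw [Real.norm_eq_abs, ← Real.dist_eq]
      exact (BoundedContinuousFunction.dist_coe_le_dist l).trans_eq (dist_comm g f)
    rw [Real.norm_eq_abs] at h1
    have h2 : (ν Set.univ).toReal = 1 := by simp
    rw [h2, mul_one] at h1
    linarith
  have hg4 := Metric.tendsto_nhds.1 (hD g hgD) (ε/4) (by linarith)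
  filter_upwards [hg4, eventually_ge_atTop 1] with n hn hn1
  have hnpos : (0:ℝ) < n := by
    have : (1:ℝ) ≤ n := by exact_mod_cast hn1
    linarith
  have hsum : dist ((n:ℝ)⁻¹ * ∑ i ∈ Finset.Icc 1 n, f (x i))
      ((n:ℝ)⁻¹ * ∑ i ∈ Finset.Icc 1 n, g (x i)) ≤ ε/4 := by
    rw [Real.dist_eq, ← mul_sub, ← Finset.sum_sub_distrib, abs_mul,
      abs_of_nonneg (by positivity : (0:ℝ) ≤ (n:ℝ)⁻¹)]
    have h3 : |∑ i ∈ Finset.Icc 1 n, (f (x i) - g (x i))|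
        ≤ ∑ i ∈ Finset.Icc 1 n, |f (x i) - g (x i)| := Finset.abs_sum_le_sum_abs _ _
    have h4 : ∑ i ∈ Finset.Icc 1 n, |f (x i) - g (x i)|
        ≤ ∑ _i ∈ Finset.Icc 1 n, dist f g := by
      apply Finset.sum_le_sum
      intro i _
      rw [← Real.dist_eq]
      exact BoundedContinuousFunction.dist_coe_le_dist _
    have h5 : ∑ _i ∈ Finset.Icc 1 n, dist f g = n * dist f g := by
      rw [Finset.sum_const]
      simp [mul_comm]
    calc (n:ℝ)⁻¹ * |∑ i ∈ Finset.Icc 1 n, (f (x i) - g (x i))|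
        ≤ (n:ℝ)⁻¹ * (n * dist f g) := by
          apply mul_le_mul_of_nonneg_left _ (by positivity)
          exact h3.trans (h4.trans (le_of_eq h5))
      _ = dist f g := by field_simp
      _ ≤ ε/4 := hgf.le
  calc dist ((n:ℝ)⁻¹ * ∑ i ∈ Finset.Icc 1 n, f (x i)) (∫ l, f l ∂ν)
      ≤ dist ((n:ℝ)⁻¹ * ∑ i ∈ Finset.Icc 1 n, f (x i))
          ((n:ℝ)⁻¹ * ∑ i ∈ Finset.Icc 1 n, g (x i))
        + dist ((n:ℝ)⁻¹ * ∑ i ∈ Finset.Icc 1 n, g (x i)) (∫ l, g l ∂ν)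
        + dist (∫ l, g l ∂ν) (∫ l, f l ∂ν) := dist_triangle4 _ _ _ _
    _ < ε := by linarith [hsum, hn, hint]

lemma bcf_separable : TopologicalSpace.SeparableSpace (ℝ≥0∞ →ᵇ ℝ) := by
  have h : Continuous (ContinuousMap.equivBoundedOfCompact ℝ≥0∞ ℝ) :=
    (ContinuousMap.isUniformInducing_equivBoundedOfCompact ℝ≥0∞ ℝ).uniformContinuous.continuous
  exact (ContinuousMap.equivBoundedOfCompact ℝ≥0∞ ℝ).surjective.denseRange.separableSpace h

lemma slln {Ω : Type*} [MeasurableSpace Ω] (P : Measure Ω) [IsProbabilityMeasure P]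
    (ν : Measure ℝ≥0∞) [IsProbabilityMeasure ν]
    (R : ℕ → Ω → ℝ≥0∞) (hRmeas : ∀ i, Measurable (R i))
    (hindep : ProbabilityTheory.iIndepFun R P)
    (hdist : ∀ i, Measure.map (R i) P = ν) (g : ℝ≥0∞ →ᵇ ℝ) :
    ∀ᵐ ω ∂P, Tendsto (fun n : ℕ => (n:ℝ)⁻¹ * ∑ i ∈ Finset.Icc 1 n, g (R i ω)) atTop
      (𝓝 (∫ l, g l ∂ν)) := by
  set X : ℕ → Ω → ℝ := fun i ω => g (R (i+1) ω) with hXdef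
  have hgm : Measurable g := g.continuous.measurable
  have hint : Integrable (X 0) P := by
    have h1 : Integrable g ν := g.integrable ν
    rw [← hdist 1] at h1
    exact (integrable_map_measure hgm.aestronglyMeasurable (hRmeas 1).aemeasurable).1 h1
  have hidp : Pairwise (Function.onFun (ProbabilityTheory.IndepFun · · P) X) := by
    intro i j hij
    exact (hindep.indepFun (show i+1 ≠ j+1 by omega)).comp hgm hgm
  have hident : ∀ i, ProbabilityTheory.IdentDistrib (X i) (X 0) P P := by
    intro i
    have hbase : ProbabilityTheory.IdentDistrib (R (i+1)) (R 1) P P :=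
      ⟨(hRmeas _).aemeasurable, (hRmeas _).aemeasurable, by rw [hdist, hdist]⟩
    exact hbase.comp hgm
  have hsl := ProbabilityTheory.strong_law_ae X hint hidp hident
  have hEX : (∫ ω, X 0 ω ∂P) = ∫ l, g l ∂ν := by
    calc (∫ ω, X 0 ω ∂P) = ∫ ω, g (R 1 ω) ∂P := rfl
      _ = ∫ l, g l ∂(Measure.map (R 1) P) :=
          (integral_map (hRmeas 1).aemeasurable hgm.aestronglyMeasurable).symm
      _ = ∫ l, g l ∂ν := by rw [hdist]
  filter_upwards [hsl] with ω hω
  rw [hEX] at hω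
  apply hω.congr
  intro n
  rw [smul_eq_mul]
  congr 1
  rw [← Finset.Ico_add_one_right_eq_Icc, Finset.sum_Ico_eq_sum_range]
  norm_num
  apply Finset.sum_congr rfl
  intro i _
  simp [hXdef, Nat.add_comm]

/-- **Almost sure weak convergence of the rescaled empirical measures** (cf. Remark 1 /
proof of Corollary 1 of Engelke–Kabluchko–Schlather): if `(R_i)` are i.i.d. with law `ν` on
`[0,∞]` and `b_n/√(2 log n) → 1` with `b_n > 0`, then almost surely
`ν_n = (1/n) Σ_{i=1}^n δ_{R_i b_n / b_i}` converges weakly to `ν`. -/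
theorem stmt7 {Ω : Type*} [MeasurableSpace Ω] (P : Measure Ω) [IsProbabilityMeasure P]
    (ν : Measure ℝ≥0∞) [IsProbabilityMeasure ν]
    (R : ℕ → Ω → ℝ≥0∞) (hRmeas : ∀ i, Measurable (R i))
    (hindep : ProbabilityTheory.iIndepFun R P)
    (hdist : ∀ i, Measure.map (R i) P = ν)
    (b : ℕ → ℝ) (hbpos : ∀ n : ℕ, 1 ≤ n → 0 < b n)
    (hblim : Tendsto (fun n : ℕ => b n / Real.sqrt (2 * Real.log n)) atTop (𝓝 1)) :
    ∀ᵐ ω ∂P, ∀ f : BoundedContinuousFunction ℝ≥0∞ ℝ,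
      Tendsto (fun n : ℕ => ∫ l, f l ∂((n : ℝ≥0∞)⁻¹ • ∑ i ∈ Finset.Icc 1 n,
          Measure.dirac (R i ω * ENNReal.ofReal (b n / b i))))
        atTop (𝓝 (∫ l, f l ∂ν)) := by
  haveI := bcf_separable
  obtain ⟨D, hDc, hDd⟩ := TopologicalSpace.exists_countable_dense (ℝ≥0∞ →ᵇ ℝ)
  have hae : ∀ᵐ ω ∂P, ∀ g ∈ D, Tendsto
      (fun n : ℕ => (n:ℝ)⁻¹ * ∑ i ∈ Finset.Icc 1 n, g (R i ω)) atTop (𝓝 (∫ l, g l ∂ν)) :=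
    (ae_ball_iff hDc).2 (fun g _ => slln P ν R hRmeas hindep hdist g)
  have hbad : ∀ δ : ℝ, 0 < δ → Tendsto (fun n : ℕ =>
      (((Finset.Icc 1 n).filter (fun i => ¬ |b n / b i - 1| ≤ δ)).card : ℝ) / n) atTop (𝓝 0) :=
    fun δ hδ => badfrac b hbpos hblim hδ
  filter_upwards [hae] with ω hω
  intro f
  have h1 := dense_upgrade ν (fun i => R i ω) D hDd hω f
  have h2 := scaled_of_unscaled b hbad (fun i => R i ω) f h1
  have hrw : ∀ n : ℕ, (∫ l, f l ∂((n : ℝ≥0∞)⁻¹ • ∑ i ∈ Finset.Icc 1 n,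
      Measure.dirac (R i ω * ENNReal.ofReal (b n / b i))))
      = (n:ℝ)⁻¹ * ∑ i ∈ Finset.Icc 1 n, f (R i ω * ENNReal.ofReal (b n / b i)) := by
    intro n
    rw [integral_smul_measure, integral_finset_sum_measure (fun i _ => f.integrable _)]
    simp [integral_dirac, ENNReal.toReal_inv]
  exact h2.congr (fun n => (hrw n).symm)
end

section
/- For every d ≥ 1, α ∈ (0,2), every m ≥ 1, all pairwise distinct points t₁,…,t_m ∈ ℝ^d, and every x ∈ ℝ^m \ {0} with Σ_{i=1}^m x_i = 0, one has Σ_{i=1}^m Σ_{j=1}^m x_i x_j ‖t_i − t_j‖^α < 0. In other words, the matrix ( ‖t_i − t_j‖^α )_{1≤i,j≤m} is strictly conditionally negative definite. -/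
open scoped BigOperators

open MeasureTheory Set Function Matrix
open scoped RealInnerProductSpace

section SchoenbergAux

lemma aux_meas {β : ℝ} {r : ℝ} :
    AEStronglyMeasurable (fun s : ℝ => (1 - Real.exp (-(r * s))) * s ^ (-1 - β))
      (volume.restrict (Ioi (0:ℝ))) := by
  apply ContinuousOn.aestronglyMeasurable _ measurableSet_Ioi
  exact ((continuous_const.sub ((Real.continuous_exp.comp (continuous_const.mul continuous_id).neg))).continuousOn).mul
    (fun s hs => (Real.continuousAt_rpow_const s _ (Or.inl (ne_of_gt hs))).continuousWithinAt)

lemma aux_integrable {β : ℝ} (hβ0 : 0 < β) (hβ1 : β < 1) {r : ℝ} (hr : 0 ≤ r) :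
    IntegrableOn (fun s : ℝ => (1 - Real.exp (-(r * s))) * s ^ (-1 - β)) (Ioi (0:ℝ)) := by
  have key : ∀ s : ℝ, 0 < s → 0 ≤ (1 - Real.exp (-(r * s))) * s ^ (-1 - β) := by
    intro s hs
    have h1 : Real.exp (-(r * s)) ≤ 1 := by
      rw [Real.exp_le_one_iff]; nlinarith
    have := Real.rpow_nonneg hs.le (-1 - β)
    nlinarith
  rw [show Ioi (0:ℝ) = Ioc 0 1 ∪ Ioi 1 from (Ioc_union_Ioi_eq_Ioi zero_le_one).symm]
  apply IntegrableOn.union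
  · -- on Ioc 0 1, bound by r * s^(-β)
    apply Integrable.mono' (g := fun s => r * s ^ (-β))
    · apply Integrable.const_mul
      exact Iff.mpr integrableOn_Ioc_iff_integrableOn_Ioo
        ((intervalIntegral.integrableOn_Ioo_rpow_iff zero_lt_one).mpr (by linarith))
    · exact aux_meas.mono_set Ioc_subset_Ioi_self
    · filter_upwards [ae_restrict_mem measurableSet_Ioc] with s hs
      have hs0 : 0 < s := hs.1
      rw [Real.norm_of_nonneg (key s hs0)]
      have h2 : 1 - Real.exp (-(r * s)) ≤ r * s := by
        have := Real.add_one_le_exp (-(r * s)); linarith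
      have h3 : (0:ℝ) ≤ s ^ (-1 - β) := Real.rpow_nonneg hs0.le _
      calc (1 - Real.exp (-(r * s))) * s ^ (-1 - β) ≤ (r * s) * s ^ (-1 - β) := by nlinarith
        _ = r * s ^ (-β) := by
            rw [mul_assoc]
            congr 1
            rw [show s * s ^ (-1-β) = s ^ (1:ℝ) * s ^ (-1-β) by rw [Real.rpow_one],
              ← Real.rpow_add hs0]
            congr 1; ring
  · apply Integrable.mono' (g := fun s => s ^ (-1 - β))
    · exact (integrableOn_Ioi_rpow_iff zero_lt_one).mpr (by linarith)
    · exact aux_meas.mono_set (Ioi_subset_Ioi zero_le_one)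
    · filter_upwards [ae_restrict_mem measurableSet_Ioi] with s hs
      have hs0 : (0:ℝ) < s := lt_trans zero_lt_one hs
      rw [Real.norm_of_nonneg (key s hs0)]
      have h1 : 0 < Real.exp (-(r * s)) := Real.exp_pos _
      have h3 : (0:ℝ) ≤ s ^ (-1 - β) := Real.rpow_nonneg hs0.le _
      nlinarith

lemma aux_subst {β : ℝ} (hβ0 : 0 < β) (hβ1 : β < 1) {a : ℝ} (ha : 0 < a) :
    ∫ s in Ioi (0:ℝ), (1 - Real.exp (-(a * s))) * s ^ (-1 - β)
      = a ^ β * ∫ s in Ioi (0:ℝ), (1 - Real.exp (-(1 * s))) * s ^ (-1 - β) := by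
  have h := integral_comp_mul_left_Ioi
    (fun u : ℝ => (1 - Real.exp (-u)) * u ^ (-1 - β)) 0 ha
  rw [mul_zero] at h
  have h2 : ∀ s ∈ Ioi (0:ℝ),
      (1 - Real.exp (-(a * s))) * (a * s) ^ (-1 - β)
        = a ^ (-1 - β) * ((1 - Real.exp (-(a * s))) * s ^ (-1 - β)) := by
    intro s hs
    rw [Real.mul_rpow ha.le (le_of_lt hs)]
    ring
  rw [setIntegral_congr_fun measurableSet_Ioi h2, integral_const_mul] at h
  have ha' : a ^ (-1 - β) ≠ 0 := ne_of_gt (Real.rpow_pos_of_pos ha _)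
  have h3 : ∫ s in Ioi (0:ℝ), (1 - Real.exp (-(a * s))) * s ^ (-1 - β)
      = (a ^ (-1 - β))⁻¹ * (a⁻¹ * ∫ u in Ioi (0:ℝ), (1 - Real.exp (-u)) * u ^ (-1 - β)) := by
    rw [smul_eq_mul] at h
    rw [eq_inv_mul_iff_mul_eq₀ ha', h]
  rw [h3]
  simp only [one_mul]
  rw [← mul_assoc]
  congr 1
  rw [← Real.rpow_neg_one a, ← Real.rpow_neg ha.le, show -(-1-β) = 1 + β by ring,
    ← Real.rpow_add ha, show 1 + β + -1 = β by ring]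

lemma aux_Cpos {β : ℝ} (hβ0 : 0 < β) (hβ1 : β < 1) :
    0 < ∫ s in Ioi (0:ℝ), (1 - Real.exp (-(1 * s))) * s ^ (-1 - β) := by
  rw [setIntegral_pos_iff_support_of_nonneg_ae]
  · refine lt_of_lt_of_le ?_ (measure_mono (subset_inter ?_ (subset_refl _)))
    · rw [Real.volume_Ioi]; exact ENNReal.zero_lt_top
    · intro s hs
      have hs0 : (0:ℝ) < s := hs
      have h1 : Real.exp (-(1 * s)) < 1 := by
        rw [Real.exp_lt_one_iff]; linarith
      have h2 : (0:ℝ) < s ^ (-1 - β) := Real.rpow_pos_of_pos hs0 _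
      have : (0:ℝ) < (1 - Real.exp (-(1 * s))) * s ^ (-1 - β) := by nlinarith
      exact ne_of_gt this
  · filter_upwards [ae_restrict_mem measurableSet_Ioi] with s hs
    have hs0 : (0:ℝ) < s := hs
    have h1 : Real.exp (-(1 * s)) ≤ 1 := by
      rw [Real.exp_le_one_iff]; linarith
    have h2 : (0:ℝ) ≤ s ^ (-1 - β) := Real.rpow_nonneg hs0.le _
    show (0:ℝ) ≤ _
    nlinarith
  · exact aux_integrable hβ0 hβ1 zero_le_one

lemma exists_separating {d m : ℕ} (hd : 1 ≤ d) (t : Fin m → EuclideanSpace ℝ (Fin d))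
    (ht : Function.Injective t) :
    ∃ u : EuclideanSpace ℝ (Fin d), Function.Injective (fun j => ⟪t j, u⟫) := by
  have hnull : volume (⋃ p : Fin m × Fin m,
      {u : EuclideanSpace ℝ (Fin d) | p.1 ≠ p.2 ∧ ⟪t p.1 - t p.2, u⟫ = 0}) = 0 := by
    apply measure_iUnion_null
    intro p
    rcases eq_or_ne p.1 p.2 with h | h
    · convert measure_empty (μ := volume)
      ext u; simp [h]
    · have hne : t p.1 - t p.2 ≠ 0 := sub_ne_zero_of_ne (fun hc => h (ht hc))
      have hker : volume ((LinearMap.ker ((innerSL ℝ (t p.1 - t p.2)) :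
          EuclideanSpace ℝ (Fin d) →L[ℝ] ℝ).toLinearMap : Submodule ℝ (EuclideanSpace ℝ (Fin d))) :
          Set (EuclideanSpace ℝ (Fin d))) = 0 := by
        apply Measure.addHaar_submodule
        intro hk
        have : t p.1 - t p.2 ∈ LinearMap.ker ((innerSL ℝ (t p.1 - t p.2)) :
            EuclideanSpace ℝ (Fin d) →L[ℝ] ℝ).toLinearMap := by rw [hk]; trivial
        simp only [LinearMap.mem_ker, ContinuousLinearMap.coe_coe, innerSL_apply_apply] at this
        exact hne (inner_self_eq_zero.mp this)
      refine measure_mono_null (fun u hu => ?_) hker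
      have := hu.2
      simpa [sub_mul, Finset.sum_sub_distrib, inner_sub_left] using this
  have huniv : volume (univ : Set (EuclideanSpace ℝ (Fin d))) ≠ 0 :=
    ne_of_gt (isOpen_univ.measure_pos volume univ_nonempty)
  obtain ⟨u, hu⟩ : ∃ u : EuclideanSpace ℝ (Fin d), u ∉ ⋃ p : Fin m × Fin m,
      {u : EuclideanSpace ℝ (Fin d) | p.1 ≠ p.2 ∧ ⟪t p.1 - t p.2, u⟫ = 0} := by
    by_contra hc
    push_neg at hc
    exact huniv ((eq_univ_of_forall hc) ▸ hnull)
  refine ⟨u, fun i j hij => ?_⟩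
  by_contra hne
  have hij' : ⟪t i, u⟫ = ⟪t j, u⟫ := hij
  exact hu (mem_iUnion.mpr ⟨(i, j), hne, by
    simp only [inner_sub_left]
    exact sub_eq_zero_of_eq hij'⟩)

lemma exists_tau {m : ℕ} (a : Fin m → ℝ) (ha : Function.Injective a)
    (x : Fin m → ℝ) (hx : x ≠ 0) :
    ∃ τ : ℝ, ∑ j, (x j : ℂ) * Complex.exp (Complex.I * ((a j : ℂ) * (τ : ℂ))) ≠ 0 := by
  by_contra hc
  push_neg at hc
  -- choose a scale θ
  obtain ⟨M, hM⟩ := Finite.exists_le (fun j => |a j|)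
  set M' : ℝ := max M 0 with hM'
  have hM'0 : 0 ≤ M' := le_max_right _ _
  set θ : ℝ := Real.pi / (1 + M') with hθ
  have hθpos : 0 < θ := div_pos Real.pi_pos (by linarith)
  have habs : ∀ j, |a j| ≤ M' := fun j => le_trans (hM j) (le_max_left _ _)
  set w : Fin m → ℂ := fun j => Complex.exp (Complex.I * ((a j : ℂ) * (θ : ℂ))) with hw
  have hwinj : Function.Injective w := by
    intro j k hjk
    have := Complex.exp_eq_exp_iff_exists_int.mp hjk
    obtain ⟨n, hn⟩ := this
    -- I * (a j * θ) = I * (a k * θ) + n * (2 * π * I)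
    have him := congrArg Complex.im hn
    simp [Complex.add_im, Complex.mul_im, Complex.I_im, Complex.I_re] at him
    -- him : a j * θ = a k * θ + n * (2 * π)
    have hbound : |a j * θ - a k * θ| < 2 * Real.pi := by
      have h1 : |a j * θ - a k * θ| ≤ |a j| * θ + |a k| * θ := by
        rw [abs_sub_comm]
        calc |a k * θ - a j * θ| ≤ |a k * θ| + |a j * θ| := abs_sub _ _
          _ = |a k| * θ + |a j| * θ := by rw [abs_mul, abs_mul, abs_of_pos hθpos]
          _ = |a j| * θ + |a k| * θ := by ring
      have h2 : |a j| * θ + |a k| * θ ≤ 2 * M' * θ := by nlinarith [habs j, habs k, hθpos.le]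
      have h3 : 2 * M' * θ < 2 * Real.pi := by
        have hd1 : M' / (1 + M') < 1 := (div_lt_one (by linarith)).mpr (by linarith)
        have he : 2 * M' * θ = 2 * Real.pi * (M' / (1 + M')) := by rw [hθ]; ring
        rw [he]
        nlinarith [Real.pi_pos]
      linarith
    have hn0 : n = 0 := by
      by_contra hn0
      have h1 : (1:ℝ) ≤ |(n:ℝ)| := by
        rw [← Int.cast_abs]
        exact_mod_cast Int.one_le_abs hn0
      have : a j * θ - a k * θ = n * (2 * Real.pi) := by linarith [him]
      rw [this, abs_mul] at hbound
      have : |(2 * Real.pi)| = 2 * Real.pi := abs_of_pos (by positivity)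
      rw [this] at hbound
      nlinarith [Real.pi_pos]
    rw [hn0] at him
    simp at him
    rcases him with him | him
    · exact ha him
    · exact absurd him (ne_of_gt hθpos)
  -- Vandermonde
  have hvdm : ((Matrix.vandermonde w)ᵀ).det ≠ 0 := by
    rw [Matrix.det_transpose]
    exact Matrix.det_vandermonde_ne_zero_iff.mpr hwinj
  have hmv : (Matrix.vandermonde w)ᵀ.mulVec (fun j => (x j : ℂ)) = 0 := by
    funext k
    have := hc ((k : ℕ) * θ)
    rw [Matrix.mulVec, dotProduct]
    simp only [Matrix.transpose_apply, Matrix.vandermonde_apply, Pi.zero_apply]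
    rw [← this]
    congr 1
    funext j
    rw [mul_comm (w j ^ (k:ℕ)) _]
    congr 1
    rw [hw]
    rw [← Complex.exp_nat_mul]
    congr 1
    push_cast
    ring
  have := Matrix.eq_zero_of_mulVec_eq_zero hvdm hmv
  apply hx
  funext j
  have := congrFun this j
  simpa using this

lemma gauss_pd {d m : ℕ} (hd : 1 ≤ d) (t : Fin m → EuclideanSpace ℝ (Fin d))
    (ht : Function.Injective t) (x : Fin m → ℝ) (hx : x ≠ 0) {s : ℝ} (hs : 0 < s) :
    0 < ∑ i, ∑ j, x i * x j * Real.exp (-(‖t i - t j‖ ^ 2 * s)) := by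
  classical
  set b : ℂ := (((4 * s)⁻¹ : ℝ) : ℂ) with hb_def
  have hs4 : (0:ℝ) < (4 * s)⁻¹ := by positivity
  have hb : 0 < b.re := by rw [hb_def, Complex.ofReal_re]; exact hs4
  set F : EuclideanSpace ℝ (Fin d) → ℂ :=
    fun v => ∑ j, (x j : ℂ) * Complex.exp (Complex.I * (⟪t j, v⟫ : ℝ)) with hF
  have expfact : ∀ (A B C xi xj : ℂ),
      Complex.exp A * (xi * Complex.exp B * (xj * Complex.exp C))
        = xi * xj * Complex.exp (A + B + C) := by
    intro A B C xi xj
    rw [Complex.exp_add, Complex.exp_add]; ring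
  have hprod : ∀ v : EuclideanSpace ℝ (Fin d),
      Complex.exp (-b * ‖v‖ ^ 2) * (F v * (starRingEnd ℂ) (F v))
      = ∑ i, ∑ j, (x i : ℂ) * (x j : ℂ) *
          Complex.exp (-b * ‖v‖ ^ 2 + Complex.I * (⟪t i - t j, v⟫ : ℝ)) := by
    intro v
    rw [hF]
    simp only [map_sum, _root_.map_mul, Complex.conj_ofReal, ← Complex.exp_conj]
    rw [Finset.sum_mul_sum]
    rw [Finset.mul_sum]
    congr 1; funext i
    rw [Finset.mul_sum]
    congr 1; funext j
    rw [expfact]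
    congr 1
    rw [Complex.conj_I, inner_sub_left]
    push_cast
    ring
  set K : ℝ := (Real.pi / ((4*s)⁻¹)) ^ ((d:ℝ) / 2) with hK
  have hKpos : 0 < K := Real.rpow_pos_of_pos (by positivity) _
  have hint : ∀ (i j : Fin m),
      ∫ v : EuclideanSpace ℝ (Fin d),
        Complex.exp (-b * ‖v‖ ^ 2 + Complex.I * (⟪t i - t j, v⟫ : ℝ))
      = (K : ℂ) * Complex.exp (-(‖t i - t j‖ ^ 2 * s) : ℝ) := by
    intro i j
    rw [GaussianFourier.integral_cexp_neg_mul_sq_norm_add hb Complex.I (t i - t j)]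
    have hsne : (s:ℂ) ≠ 0 := Complex.ofReal_ne_zero.mpr hs.ne'
    have h1 : (Complex.I ^ 2 * (‖t i - t j‖:ℂ) ^ 2 / (4 * b)) = ((-(‖t i - t j‖ ^ 2 * s) : ℝ) : ℂ) := by
      rw [Complex.I_sq, hb_def]
      push_cast
      field_simp
    rw [h1]
    congr 1
    rw [hK, Complex.ofReal_cpow (by positivity), hb_def]
    rw [Complex.ofReal_div]
    congr 1
    all_goals push_cast [finrank_euclideanSpace_fin]; try ring
  set g : EuclideanSpace ℝ (Fin d) → ℝ :=
    fun v => Real.exp (-((4*s)⁻¹ * ‖v‖ ^ 2)) * Complex.normSq (F v) with hg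
  have hgF : ∀ v, ((g v : ℝ) : ℂ) = Complex.exp (-b * ‖v‖ ^ 2) * (F v * (starRingEnd ℂ) (F v)) := by
    intro v
    rw [Complex.mul_conj, hg]
    push_cast
    congr 2
    rw [hb_def]
    push_cast
    ring
  have hFcont : Continuous F := by
    rw [hF]
    apply continuous_finset_sum
    intro j _
    exact continuous_const.mul (Complex.continuous_exp.comp
      (continuous_const.mul (Complex.continuous_ofReal.comp
        (Continuous.inner continuous_const continuous_id))))
  have hgcont : Continuous g := by
    rw [hg]
    exact (Real.continuous_exp.comp (continuous_const.mul (continuous_norm.pow 2)).neg).mul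
      (Complex.continuous_normSq.comp hFcont)
  have hgauss : Integrable (fun v : EuclideanSpace ℝ (Fin d) =>
      Real.exp (-((4*s)⁻¹ * ‖v‖ ^ 2))) := by
    have h0 := (GaussianFourier.integrable_cexp_neg_mul_sq_norm_add
      (V := EuclideanSpace ℝ (Fin d)) hb 0 0).norm
    apply h0.congr
    filter_upwards with v
    have harg : (-b * ((‖v‖:ℂ)) ^ 2 + 0 * ((⟪(0:EuclideanSpace ℝ (Fin d)), v⟫ : ℝ) : ℂ))
        = ((-((4*s)⁻¹ * ‖v‖ ^ 2) : ℝ) : ℂ) := by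
      rw [hb_def]; push_cast; ring
    rw [harg, ← Complex.ofReal_exp, Complex.norm_real, Real.norm_of_nonneg (Real.exp_pos _).le]
  have habsF : ∀ v, ‖F v‖ ≤ ∑ j, |x j| := by
    intro v
    rw [hF]
    refine le_trans (norm_sum_le _ _) (le_of_eq (Finset.sum_congr rfl ?_))
    intro j _
    rw [norm_mul, Complex.norm_real, Real.norm_eq_abs]
    rw [show Complex.I * ((⟪t j, v⟫ : ℝ) : ℂ) = ((⟪t j, v⟫ : ℝ) : ℂ) * Complex.I by ring]
    rw [Complex.norm_exp_ofReal_mul_I, mul_one]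
  have hgint : Integrable g := by
    apply Integrable.mono' (g := fun v => Real.exp (-((4*s)⁻¹ * ‖v‖ ^ 2)) * ((∑ j, |x j|) ^ 2))
      (hgauss.mul_const _) hgcont.aestronglyMeasurable
    filter_upwards with v
    rw [hg, Real.norm_of_nonneg (mul_nonneg (Real.exp_pos _).le (Complex.normSq_nonneg _))]
    apply mul_le_mul_of_nonneg_left _ (Real.exp_pos _).le
    rw [← Complex.sq_norm]
    have h1 := habsF v
    have h2 := norm_nonneg (F v)
    nlinarith
  -- integral identity
  have hintg : ∀ (i j : Fin m), Integrable (fun v : EuclideanSpace ℝ (Fin d) =>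
      (x i : ℂ) * (x j : ℂ) * Complex.exp (-b * ‖v‖ ^ 2 + Complex.I * (⟪t i - t j, v⟫ : ℝ))) :=
    fun i j => (GaussianFourier.integrable_cexp_neg_mul_sq_norm_add hb Complex.I (t i - t j)).const_mul _
  have hkey : ((∫ v, g v : ℝ) : ℂ)
      = (K : ℂ) * ((∑ i, ∑ j, x i * x j * Real.exp (-(‖t i - t j‖ ^ 2 * s))) : ℝ) := by
    have hIR : ∫ v, ((g v : ℝ) : ℂ) = ((∫ v, g v : ℝ) : ℂ) := integral_ofReal
    rw [← hIR]
    calc ∫ v, ((g v : ℝ) : ℂ)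
        = ∫ v, ∑ i, ∑ j, (x i : ℂ) * (x j : ℂ) *
            Complex.exp (-b * ‖v‖ ^ 2 + Complex.I * (⟪t i - t j, v⟫ : ℝ)) := by
          apply integral_congr_ae
          filter_upwards with v
          rw [hgF v, hprod v]
      _ = ∑ i, ∑ j, ∫ v, (x i : ℂ) * (x j : ℂ) *
            Complex.exp (-b * ‖v‖ ^ 2 + Complex.I * (⟪t i - t j, v⟫ : ℝ)) := by
          rw [integral_finset_sum _ (fun i _ => integrable_finset_sum _ (fun j _ => hintg i j))]
          exact Finset.sum_congr rfl (fun i _ => integral_finset_sum _ (fun j _ => hintg i j))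
      _ = ∑ i, ∑ j, (x i : ℂ) * (x j : ℂ) *
            ((K : ℂ) * Complex.exp (-(‖t i - t j‖ ^ 2 * s) : ℝ)) := by
          refine Finset.sum_congr rfl (fun i _ => Finset.sum_congr rfl (fun j _ => ?_))
          rw [integral_const_mul, hint i j]
      _ = (K : ℂ) * ((∑ i, ∑ j, x i * x j * Real.exp (-(‖t i - t j‖ ^ 2 * s))) : ℝ) := by
          push_cast
          rw [Finset.mul_sum]
          refine Finset.sum_congr rfl (fun i _ => ?_)
          rw [Finset.mul_sum]
          refine Finset.sum_congr rfl (fun j _ => ?_)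
          ring
  have hS : ∫ v, g v = K * (∑ i, ∑ j, x i * x j * Real.exp (-(‖t i - t j‖ ^ 2 * s))) := by
    exact_mod_cast hkey
  have hpos : 0 < ∫ v, g v := by
    have hnn : ∀ v, 0 ≤ g v := fun v => mul_nonneg (Real.exp_pos _).le (Complex.normSq_nonneg _)
    rw [integral_pos_iff_support_of_nonneg_ae (Filter.Eventually.of_forall hnn) hgint]
    have hopen : IsOpen (support g) := by
      have hsupp : support g = F ⁻¹' ({0}ᶜ) := by
        ext v
        simp only [hg, mem_support, mem_preimage, mem_compl_iff, mem_singleton_iff,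
          mul_ne_zero_iff]
        constructor
        · intro h
          exact fun h0 => h.2 (by rw [h0]; simp)
        · intro h
          exact ⟨Real.exp_ne_zero _, fun hc => h (Complex.normSq_eq_zero.mp hc)⟩
      rw [hsupp]
      exact (isOpen_compl_singleton).preimage hFcont
    obtain ⟨u, hu⟩ := exists_separating hd t ht
    obtain ⟨τ, hτ⟩ := exists_tau _ hu x hx
    have hFτ : F (τ • u) = ∑ j, (x j : ℂ) *
        Complex.exp (Complex.I * (((⟪t j, u⟫ : ℝ) : ℂ) * (τ : ℂ))) := by
      rw [hF]
      refine Finset.sum_congr rfl (fun j _ => ?_)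
      congr 2
      rw [real_inner_smul_right]
      push_cast
      ring
    have hmem : (τ • u) ∈ support g := by
      rw [mem_support, hg]
      simp only [mul_ne_zero_iff]
      refine ⟨Real.exp_ne_zero _, fun hc => ?_⟩
      have : F (τ • u) = 0 := Complex.normSq_eq_zero.mp hc
      rw [hFτ] at this
      exact hτ this
    exact hopen.measure_pos volume ⟨_, hmem⟩
  rw [hS] at hpos
  nlinarith

end SchoenbergAux

/-- The matrix `(‖t_i − t_j‖^α)` built from pairwise distinct points of `ℝ^d` is strictly
conditionally negative definite. -/
theorem stmt12 (d : ℕ) (hd : 1 ≤ d) (α : ℝ) (hα : α ∈ Set.Ioo (0 : ℝ) 2)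
    (m : ℕ) (hm : 1 ≤ m) (t : Fin m → EuclideanSpace ℝ (Fin d))
    (ht : Function.Injective t)
    (x : Fin m → ℝ) (hx : x ≠ 0) (hsum : ∑ i, x i = 0) :
    ∑ i, ∑ j, x i * x j * ‖t i - t j‖ ^ α < 0 := by
  obtain ⟨hα0, hα2⟩ := hα
  set β : ℝ := α / 2 with hβ
  have hβ0 : 0 < β := by rw [hβ]; linarith
  have hβ1 : β < 1 := by rw [hβ]; linarith
  set C : ℝ := ∫ s in Ioi (0:ℝ), (1 - Real.exp (-(1 * s))) * s ^ (-1 - β) with hC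
  have hCpos : 0 < C := aux_Cpos hβ0 hβ1
  -- per-pair identity
  have hpair : ∀ i j : Fin m, C * ‖t i - t j‖ ^ α
      = ∫ s in Ioi (0:ℝ), (1 - Real.exp (-(‖t i - t j‖ ^ 2 * s))) * s ^ (-1 - β) := by
    intro i j
    rcases eq_or_ne (t i) (t j) with h | h
    · rw [h]
      simp only [sub_self, norm_zero]
      rw [Real.zero_rpow (ne_of_gt hα0), mul_zero]
      symm
      have hz : ∀ s ∈ Ioi (0:ℝ), (1 - Real.exp (-((0:ℝ) ^ 2 * s))) * s ^ (-1 - β) = 0 := by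
        intro s _; norm_num
      rw [setIntegral_congr_fun measurableSet_Ioi hz, integral_zero]
    · have hr : 0 < ‖t i - t j‖ ^ 2 := pow_pos (norm_pos_iff.mpr (sub_ne_zero_of_ne h)) 2
      rw [aux_subst hβ0 hβ1 hr, ← hC]
      rw [mul_comm C _]
      congr 1
      rw [← Real.rpow_natCast ‖t i - t j‖ 2, ← Real.rpow_mul (norm_nonneg _)]
      rw [hβ]
      congr 1
      push_cast
      ring
  -- swap sum and integral
  set Φ : ℝ → ℝ := fun s => ∑ i, ∑ j,
    x i * x j * ((1 - Real.exp (-(‖t i - t j‖ ^ 2 * s))) * s ^ (-1 - β)) with hΦ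
  have hCT : C * (∑ i, ∑ j, x i * x j * ‖t i - t j‖ ^ α) = ∫ s in Ioi (0:ℝ), Φ s := by
    rw [Finset.mul_sum]
    rw [hΦ]
    rw [integral_finset_sum _ (fun i _ => integrable_finset_sum _
      (fun j _ => (aux_integrable hβ0 hβ1 (sq_nonneg ‖t i - t j‖)).const_mul (x i * x j)))]
    refine Finset.sum_congr rfl (fun i _ => ?_)
    rw [Finset.mul_sum]
    rw [integral_finset_sum _
      (fun j _ => (aux_integrable hβ0 hβ1 (sq_nonneg ‖t i - t j‖)).const_mul (x i * x j))]
    refine Finset.sum_congr rfl (fun j _ => ?_)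
    rw [MeasureTheory.integral_const_mul]
    rw [show C * (x i * x j * ‖t i - t j‖ ^ α) = x i * x j * (C * ‖t i - t j‖ ^ α) by ring,
      hpair i j]
  -- pointwise negativity
  have hneg : ∀ s ∈ Ioi (0:ℝ), Φ s
      = -((∑ i, ∑ j, x i * x j * Real.exp (-(‖t i - t j‖ ^ 2 * s))) * s ^ (-1 - β)) := by
    intro s _
    rw [hΦ]
    have expand : ∀ i j : Fin m,
        x i * x j * ((1 - Real.exp (-(‖t i - t j‖ ^ 2 * s))) * s ^ (-1 - β))
        = x i * x j * s ^ (-1 - β)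
          - x i * x j * Real.exp (-(‖t i - t j‖ ^ 2 * s)) * s ^ (-1 - β) := by
      intro i j; ring
    simp_rw [expand, Finset.sum_sub_distrib]
    have h1 : ∑ i, ∑ j, x i * x j * s ^ (-1 - β) = 0 := by
      simp_rw [mul_assoc, ← Finset.mul_sum, ← Finset.sum_mul, hsum, zero_mul]
    rw [h1, zero_sub]
    congr 1
    rw [Finset.sum_mul]
    refine Finset.sum_congr rfl (fun i _ => ?_)
    rw [Finset.sum_mul]
  -- positivity of the integral of -Φ
  have hintΦ : IntegrableOn Φ (Ioi (0:ℝ)) := by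
    rw [hΦ]
    exact integrable_finset_sum _ (fun i _ => integrable_finset_sum _
      (fun j _ => (aux_integrable hβ0 hβ1 (sq_nonneg ‖t i - t j‖)).const_mul (x i * x j)))
  have hpos : 0 < ∫ s in Ioi (0:ℝ), -Φ s := by
    rw [setIntegral_pos_iff_support_of_nonneg_ae]
    · refine lt_of_lt_of_le ?_ (measure_mono (subset_inter (fun s hs => ?_) (subset_refl _)))
      · rw [Real.volume_Ioi]; exact ENNReal.zero_lt_top
      · have hs0 : (0:ℝ) < s := hs
        have hG := gauss_pd hd t ht x hx hs0
        have hp : (0:ℝ) < s ^ (-1 - β) := Real.rpow_pos_of_pos hs0 _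
        have : 0 < -Φ s := by
          rw [hneg s hs]
          simp only [neg_neg]
          positivity
        exact ne_of_gt this
    · filter_upwards [ae_restrict_mem measurableSet_Ioi] with s hs
      have hs0 : (0:ℝ) < s := hs
      have hG := gauss_pd hd t ht x hx hs0
      have hp : (0:ℝ) < s ^ (-1 - β) := Real.rpow_pos_of_pos hs0 _
      show (0:ℝ) ≤ -Φ s
      rw [hneg s hs]
      simp only [neg_neg]
      positivity
    · exact hintΦ.neg
  rw [integral_neg] at hpos
  have : C * (∑ i, ∑ j, x i * x j * ‖t i - t j‖ ^ α) < 0 := by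
    rw [hCT]; linarith
  nlinarith
end

section
/- Let q ≥ 1, let V be an ℝ^q-valued random variable and (V_i)_{i∈ℕ} a sequence of i.i.d. copies of V, and let (ε_{i,n})_{n∈ℕ, 1≤i≤n} be ℝ^q-valued random variables on the same probability space such that for every N > 0, almost surely max{ ‖ε_{i,n}‖ : 1 ≤ i ≤ n, ‖V_i‖ ≤ N } → 0 as n → ∞. Then for every bounded continuous function f : ℝ^q → ℝ, almost surely (1/n) Σ_{i=1}^n f(V_i + ε_{i,n}) → E[f(V)] as n → ∞. -/
open MeasureTheory Filter Topology ProbabilityTheory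

theorem aux_slln13 (q : ℕ)
    {Ω : Type*} [MeasurableSpace Ω] (P : Measure Ω) [IsProbabilityMeasure P]
    (V : Ω → EuclideanSpace ℝ (Fin q)) (hV : Measurable V)
    (Vs : ℕ → Ω → EuclideanSpace ℝ (Fin q)) (hVsMeas : ∀ i, Measurable (Vs i))
    (hindep : ProbabilityTheory.iIndepFun Vs P)
    (hident : ∀ i, Measure.map (Vs i) P = Measure.map V P)
    (g : EuclideanSpace ℝ (Fin q) → ℝ) (hgm : Measurable g)
    (C : ℝ) (hgb : ∀ x, |g x| ≤ C) :
    ∀ᵐ ω ∂P, Tendsto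
      (fun n : ℕ => (n : ℝ)⁻¹ * ∑ i ∈ Finset.Icc 1 n, g (Vs i ω))
      atTop (𝓝 (∫ ω, g (V ω) ∂P)) := by
  set X : ℕ → Ω → ℝ := fun i ω => g (Vs (i + 1) ω) with hX
  have hXm : ∀ i, Measurable (X i) := fun i => hgm.comp (hVsMeas (i + 1))
  have hint : Integrable (X 0) P := by
    refine (integrable_const C).mono' (hXm 0).aestronglyMeasurable ?_
    filter_upwards with ω
    simpa [X, Real.norm_eq_abs] using hgb (Vs 1 ω)
  have hpind : Pairwise (Function.onFun (fun x1 x2 => IndepFun x1 x2 P) X) := by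
    intro i j hij
    exact (hindep.indepFun (by omega : i + 1 ≠ j + 1)).comp hgm hgm
  have hid : ∀ i, IdentDistrib (X i) (X 0) P P := by
    intro i
    have h1 : IdentDistrib (Vs (i + 1)) (Vs 1) P P :=
      ⟨(hVsMeas _).aemeasurable, (hVsMeas 1).aemeasurable, by rw [hident, hident]⟩
    exact h1.comp hgm
  have hlim : (∫ ω, X 0 ω ∂P) = ∫ ω, g (V ω) ∂P := by
    have h1 : (∫ ω, g (Vs 1 ω) ∂P) = ∫ y, g y ∂(Measure.map (Vs 1) P) :=
      (integral_map (hVsMeas 1).aemeasurable hgm.aestronglyMeasurable).symm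
    have h2 : (∫ y, g y ∂(Measure.map V P)) = ∫ ω, g (V ω) ∂P :=
      integral_map hV.aemeasurable hgm.aestronglyMeasurable
    simp only [X]
    rw [h1, hident 1, h2]
  have := strong_law_ae X hint hpind hid
  rw [hlim] at this
  filter_upwards [this] with ω hω
  convert hω using 2 with n
  rw [smul_eq_mul]
  congr 1
  rw [← Finset.Ico_add_one_right_eq_Icc, Finset.sum_Ico_eq_sum_range]
  simp [X, add_comm]

/-- Law of large numbers for triangular perturbations of i.i.d. vectors
(Lemma 1 of Engelke–Kabluchko–Schlather). -/
theorem stmt13 (q : ℕ) (hq : 1 ≤ q)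
    {Ω : Type*} [MeasurableSpace Ω] (P : Measure Ω) [IsProbabilityMeasure P]
    (V : Ω → EuclideanSpace ℝ (Fin q)) (hV : Measurable V)
    (Vs : ℕ → Ω → EuclideanSpace ℝ (Fin q)) (hVsMeas : ∀ i, Measurable (Vs i))
    (hindep : ProbabilityTheory.iIndepFun Vs P)
    (hident : ∀ i, Measure.map (Vs i) P = Measure.map V P)
    (ε : ℕ → ℕ → Ω → EuclideanSpace ℝ (Fin q))
    (hε : ∀ N : ℝ, 0 < N → ∀ᵐ ω ∂P, ∀ δ : ℝ, 0 < δ → ∃ n₀ : ℕ, ∀ n ≥ n₀,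
        ∀ i, 1 ≤ i → i ≤ n → ‖Vs i ω‖ ≤ N → ‖ε n i ω‖ < δ)
    (f : BoundedContinuousFunction (EuclideanSpace ℝ (Fin q)) ℝ) :
    ∀ᵐ ω ∂P, Tendsto
      (fun n : ℕ => (n : ℝ)⁻¹ * ∑ i ∈ Finset.Icc 1 n, f (Vs i ω + ε n i ω))
      atTop (𝓝 (∫ ω, f (V ω) ∂P)) := by
  set C : ℝ := ‖f‖ with hCdef
  have hC : 0 ≤ C := norm_nonneg f
  -- indicator-like functions
  set χ : ℕ → EuclideanSpace ℝ (Fin q) → ℝ :=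
    fun m x => if (m : ℝ) + 1 < ‖x‖ then 1 else 0 with hχdef
  have hχmeas : ∀ m, Measurable (χ m) := by
    intro m
    exact Measurable.ite (measurableSet_lt measurable_const measurable_norm)
      measurable_const measurable_const
  have hχ01 : ∀ m x, 0 ≤ χ m x ∧ χ m x ≤ 1 := by
    intro m x
    simp only [χ]
    split <;> norm_num
  have hχabs : ∀ m x, |χ m x| ≤ 1 := by
    intro m x
    rw [abs_of_nonneg (hχ01 m x).1]
    exact (hχ01 m x).2
  -- the indicator means tend to 0 as m → ∞
  have hsmall : Tendsto (fun m : ℕ => ∫ ω, χ m (V ω) ∂P) atTop (𝓝 0) := by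
    have h0 : (0 : ℝ) = ∫ _ω, (0 : ℝ) ∂P := by simp
    rw [h0]
    refine tendsto_integral_of_dominated_convergence (fun _ => (1 : ℝ))
      (fun m => ((hχmeas m).comp hV).aestronglyMeasurable) (integrable_const 1)
      (fun m => ?_) ?_
    · filter_upwards with ω
      rw [Real.norm_eq_abs]
      exact hχabs m (V ω)
    · filter_upwards with ω
      have hev : ∀ᶠ m : ℕ in atTop, χ m (V ω) = 0 := by
        rw [eventually_atTop]
        refine ⟨⌈‖V ω‖⌉₊, fun m hm => ?_⟩
        have h1 : ‖V ω‖ ≤ (m : ℝ) + 1 := by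
          calc ‖V ω‖ ≤ (⌈‖V ω‖⌉₊ : ℝ) := Nat.le_ceil _
          _ ≤ (m : ℝ) := by exact_mod_cast hm
          _ ≤ (m : ℝ) + 1 := by linarith
        simp only [χ, if_neg (not_lt.2 h1)]
      exact tendsto_const_nhds.congr' (by filter_upwards [hev] with m hm using hm.symm)
  -- strong laws
  have H1 := aux_slln13 q P V hV Vs hVsMeas hindep hident (fun x => f x)
    f.continuous.measurable C (fun x => by
      rw [← Real.norm_eq_abs]; exact f.norm_coe_le_norm x)
  have H2 : ∀ᵐ ω ∂P, ∀ m : ℕ, Tendsto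
      (fun n : ℕ => (n : ℝ)⁻¹ * ∑ i ∈ Finset.Icc 1 n, χ m (Vs i ω))
      atTop (𝓝 (∫ ω, χ m (V ω) ∂P)) :=
    (ae_all_iff).2 fun m =>
      aux_slln13 q P V hV Vs hVsMeas hindep hident (χ m) (hχmeas m) 1 (hχabs m)
  have H3 : ∀ᵐ ω ∂P, ∀ m : ℕ, ∀ δ : ℝ, 0 < δ → ∃ n₀ : ℕ, ∀ n ≥ n₀,
      ∀ i, 1 ≤ i → i ≤ n → ‖Vs i ω‖ ≤ (m : ℝ) + 1 → ‖ε n i ω‖ < δ :=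
    (ae_all_iff).2 fun m => hε ((m : ℝ) + 1) (by positivity)
  filter_upwards [H1, H2, H3] with ω h1 h2 h3
  rw [Metric.tendsto_atTop]
  intro η hη
  have hη8 : 0 < η / (8 * (C + 1)) := by positivity
  -- choose m with small tail probability
  obtain ⟨m, hm⟩ := (hsmall.eventually_lt_const hη8).exists
  set pm : ℝ := ∫ ω, χ m (V ω) ∂P with hpmdef
  have hpm0 : 0 ≤ pm := integral_nonneg fun ω => (hχ01 m (V ω)).1
  -- uniform continuity on closed ball of radius m+2
  have hucont : UniformContinuousOn f (Metric.closedBall 0 ((m : ℝ) + 2)) :=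
    (isCompact_closedBall _ _).uniformContinuousOn_of_continuous
      f.continuous.continuousOn
  obtain ⟨δ', hδ'pos, hδ'⟩ := (Metric.uniformContinuousOn_iff.1 hucont) (η / 4)
    (by positivity)
  set δ : ℝ := min δ' 1 with hδdef
  have hδpos : 0 < δ := lt_min hδ'pos one_pos
  have hδ1 : δ ≤ 1 := min_le_right _ _
  have hδδ' : δ ≤ δ' := min_le_left _ _
  -- thresholds
  obtain ⟨n₁, hn₁⟩ := h3 m δ hδpos
  obtain ⟨n₂, hn₂⟩ := (Metric.tendsto_atTop.1 (h2 m)) (η / (8 * (C + 1))) hη8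
  obtain ⟨n₃, hn₃⟩ := (Metric.tendsto_atTop.1 h1) (η / 4) (by positivity)
  refine ⟨max (max n₁ n₂) (max n₃ 1), fun n hn => ?_⟩
  have hnn₁ : n ≥ n₁ := le_trans (le_trans (le_max_left _ _) (le_max_left _ _)) hn
  have hnn₂ : n ≥ n₂ := le_trans (le_trans (le_max_right _ _) (le_max_left _ _)) hn
  have hnn₃ : n ≥ n₃ := le_trans (le_trans (le_max_left _ _) (le_max_right _ _)) hn
  have hn1 : 1 ≤ n := le_trans (le_trans (le_max_right _ _) (le_max_right _ _)) hn
  have hnpos : (0 : ℝ) < (n : ℝ) := by exact_mod_cast hn1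
  set Sn : ℝ := (n : ℝ)⁻¹ * ∑ i ∈ Finset.Icc 1 n, f (Vs i ω + ε n i ω) with hSn
  set Tn : ℝ := (n : ℝ)⁻¹ * ∑ i ∈ Finset.Icc 1 n, (f (Vs i ω) : ℝ) with hTn
  set An : ℝ := (n : ℝ)⁻¹ * ∑ i ∈ Finset.Icc 1 n, χ m (Vs i ω) with hAn
  have hAbound : An < η / (4 * (C + 1)) := by
    have := hn₂ n hnn₂
    rw [Real.dist_eq] at this
    have h2' : An - pm ≤ |An - pm| := le_abs_self _
    have : An < pm + η / (8 * (C + 1)) := by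
      simp only [← hAn] at this ⊢
      linarith
    calc An < pm + η / (8 * (C + 1)) := this
      _ < η / (8 * (C + 1)) + η / (8 * (C + 1)) := by linarith
      _ = η / (4 * (C + 1)) := by
          have hC1 : (0:ℝ) < C + 1 := by linarith
          field_simp
          ring
  -- per-term bound
  have hterm : ∀ i ∈ Finset.Icc 1 n,
      |f (Vs i ω + ε n i ω) - f (Vs i ω)| ≤ η / 4 + 2 * C * χ m (Vs i ω) := by
    intro i hi
    rw [Finset.mem_Icc] at hi
    by_cases hVi : ‖Vs i ω‖ ≤ (m : ℝ) + 1
    · have hεi : ‖ε n i ω‖ < δ := hn₁ n hnn₁ i hi.1 hi.2 hVi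
      have hx : Vs i ω + ε n i ω ∈ Metric.closedBall (0 : EuclideanSpace ℝ (Fin q))
          ((m : ℝ) + 2) := by
        rw [Metric.mem_closedBall, dist_zero_right]
        calc ‖Vs i ω + ε n i ω‖ ≤ ‖Vs i ω‖ + ‖ε n i ω‖ := norm_add_le _ _
          _ ≤ ((m : ℝ) + 1) + 1 := add_le_add hVi (le_trans hεi.le hδ1)
          _ = (m : ℝ) + 2 := by ring
      have hy : Vs i ω ∈ Metric.closedBall (0 : EuclideanSpace ℝ (Fin q))
          ((m : ℝ) + 2) := by
        rw [Metric.mem_closedBall, dist_zero_right]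
        linarith
      have hdist : dist (Vs i ω + ε n i ω) (Vs i ω) < δ' := by
        rw [dist_eq_norm, add_sub_cancel_left]
        exact lt_of_lt_of_le hεi hδδ'
      have := hδ' _ hx _ hy hdist
      rw [Real.dist_eq] at this
      have hχnn : 0 ≤ 2 * C * χ m (Vs i ω) :=
        mul_nonneg (by positivity) (hχ01 m _).1
      linarith
    · have hχ1 : χ m (Vs i ω) = 1 := by
        simp only [χ, if_pos (not_le.1 hVi)]
      have := f.dist_le_two_norm (Vs i ω + ε n i ω) (Vs i ω)
      rw [Real.dist_eq] at this
      rw [hχ1]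
      have : |f (Vs i ω + ε n i ω) - f (Vs i ω)| ≤ 2 * C := this
      linarith
  -- sum bound
  have hST : |Sn - Tn| ≤ η / 4 + 2 * C * An := by
    have h1' : Sn - Tn = (n : ℝ)⁻¹ *
        ∑ i ∈ Finset.Icc 1 n, (f (Vs i ω + ε n i ω) - f (Vs i ω)) := by
      rw [hSn, hTn, ← mul_sub, Finset.sum_sub_distrib]
    rw [h1', abs_mul, abs_of_nonneg (inv_nonneg.2 hnpos.le)]
    have hsum : |∑ i ∈ Finset.Icc 1 n, (f (Vs i ω + ε n i ω) - f (Vs i ω))|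
        ≤ ∑ i ∈ Finset.Icc 1 n, (η / 4 + 2 * C * χ m (Vs i ω)) :=
      le_trans (Finset.abs_sum_le_sum_abs _ _) (Finset.sum_le_sum hterm)
    have heq : ∑ i ∈ Finset.Icc 1 n, (η / 4 + 2 * C * χ m (Vs i ω))
        = (n : ℝ) * (η / 4) + 2 * C * ∑ i ∈ Finset.Icc 1 n, χ m (Vs i ω) := by
      rw [Finset.sum_add_distrib, Finset.sum_const, Finset.mul_sum]
      simp [Nat.card_Icc]
    calc (n : ℝ)⁻¹ * |∑ i ∈ Finset.Icc 1 n, (f (Vs i ω + ε n i ω) - f (Vs i ω))|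
        ≤ (n : ℝ)⁻¹ * ((n : ℝ) * (η / 4) + 2 * C * ∑ i ∈ Finset.Icc 1 n, χ m (Vs i ω)) := by
          rw [← heq]
          exact mul_le_mul_of_nonneg_left hsum (inv_nonneg.2 hnpos.le)
      _ = η / 4 + 2 * C * An := by
          rw [hAn]
          field_simp
  have hTL : |Tn - ∫ ω, f (V ω) ∂P| < η / 4 := by
    have := hn₃ n hnn₃
    rw [Real.dist_eq] at this
    exact this
  have hCA : 2 * C * An < η / 2 := by
    have hAnn : 0 ≤ An :=
      mul_nonneg (inv_nonneg.2 hnpos.le)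
        (Finset.sum_nonneg fun i _ => (hχ01 m _).1)
    calc 2 * C * An ≤ 2 * C * (η / (4 * (C + 1))) :=
          mul_le_mul_of_nonneg_left hAbound.le (by positivity)
      _ = C / (C + 1) * (η / 2) := by
          have hC1 : (0:ℝ) < C + 1 := by linarith
          field_simp
          ring
      _ < 1 * (η / 2) := by
          have hC1 : (0:ℝ) < C + 1 := by linarith
          exact mul_lt_mul_of_pos_right ((div_lt_one hC1).2 (by linarith))
            (by positivity)
      _ = η / 2 := one_mul _
  rw [Real.dist_eq]
  calc |Sn - ∫ ω, f (V ω) ∂P|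
      ≤ |Sn - Tn| + |Tn - ∫ ω, f (V ω) ∂P| := abs_sub_le _ _ _
    _ < (η / 4 + 2 * C * An) + η / 4 := by linarith [hST, hTL]
    _ < η := by linarith [hCA]
end
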